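/- arXiv:2501.05304 — 2 statements merged into one kernel-verified Lean document; each statement's English description precedes it below -/
import Mathlib

section
/- Let M > 0 and let φ_M solve the truncated mean-field equation i∂_t φ_M = A φ_M + F_M(φ_M) with ‖φ₀‖_{ℓ²} = 1 and φ_M(0) = φ₀. Then: (i) ‖φ_M(t)‖_{ℓ²} = ‖φ₀‖_{ℓ²} = 1 for all t; (ii) ⟨φ_M(t), 𝒩 φ_M(t)⟩ = ⟨φ₀, 𝒩 φ₀⟩ for all t; (iii) ⟨φ_M(t), h_M^{α_M(t)} φ_M(t)⟩ = ⟨φ₀, h_M^{α_M(0)} φ₀⟩ for all t, where h_M^{α_M} := A − J(α_M a*_M + conj(α_M) a_M − |α_M|²); (iv) |α_M(t)| ≤ ‖𝒩^{1/2} φ₀‖_{ℓ²} for all t. -/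
namespace BoseHubbard

noncomputable section

open scoped BigOperators ComplexConjugate
open Complex Filter

/-! ## The one-lattice-site Hilbert space ℓ²(ℂ), modeled by coefficient sequences -/

/-- A vector of `ℓ²(ℂ)`, given by its coefficients in the canonical basis `(|n⟩)ₙ`. -/
abbrev Seq : Type := ℕ → ℂ

/-- The `ℓ²` inner product `⟨φ, ψ⟩` (antilinear in the first argument). -/
def sInner (φ ψ : Seq) : ℂ := ∑' n, conj (φ n) * ψ n

/-- The squared `ℓ²` norm `‖φ‖²`. -/
def sNormSq (φ : Seq) : ℝ := ∑' n, ‖φ n‖ ^ 2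

/-- Membership in `ℓ²(ℂ)`. -/
def MemL2 (φ : Seq) : Prop := Summable fun n => ‖φ n‖ ^ 2

/-- The moment `⟨φ, 𝒩^k φ⟩` of the number operator, for a real exponent `k`. -/
def Nmom (k : ℝ) (φ : Seq) : ℝ := ∑' n : ℕ, (n : ℝ) ^ k * ‖φ n‖ ^ 2

/-- Finiteness of the moment `⟨φ, 𝒩^k φ⟩`. -/
def MemNmom (k : ℝ) (φ : Seq) : Prop := Summable fun n : ℕ => (n : ℝ) ^ k * ‖φ n‖ ^ 2

/-- The shifted moment `⟨φ, (𝒩+l)^k φ⟩`. -/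
def NmomShift (k : ℝ) (l : ℕ) (φ : Seq) : ℝ := ∑' n : ℕ, ((n : ℝ) + l) ^ k * ‖φ n‖ ^ 2

/-- Membership in the domain `D(𝒩^k)`, i.e. `φ ∈ ℓ²` and `𝒩^k φ ∈ ℓ²`. -/
def MemDomN (k : ℝ) (φ : Seq) : Prop := MemL2 φ ∧ MemNmom (2 * k) φ

/-- The annihilation operator `a`, acting on coefficients. -/
def opA (φ : Seq) : Seq := fun n => (Real.sqrt ((n : ℝ) + 1) : ℂ) * φ (n + 1)

/-- The creation operator `a*`, acting on coefficients (note `Real.sqrt 0 = 0` at `n = 0`). -/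
def opAd (φ : Seq) : Seq := fun n => ((Real.sqrt (n : ℝ)) : ℂ) * φ (n - 1)

/-- The order parameter `α_φ = ⟨φ, a φ⟩`. -/
def alphaOf (φ : Seq) : ℂ := sInner φ (opA φ)

/-- The mean-field operator
`h^φ = -J(α_φ a* + conj α_φ a - |α_φ|²) + (J-μ)𝒩 + (U/2)𝒩(𝒩-1)` applied to `ψ`. -/
def hMF (J μ U : ℝ) (φ ψ : Seq) : Seq := fun n =>
  (-(J : ℂ)) * (alphaOf φ * opAd ψ n + conj (alphaOf φ) * opA ψ n
      - ((‖alphaOf φ‖ : ℂ)) ^ 2 * ψ n)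
    + (((J : ℂ) - (μ : ℂ)) * (n : ℂ) + ((U : ℂ) / 2) * (n : ℂ) * ((n : ℂ) - 1)) * ψ n

/-- `φ : ℝ → Seq` solves the mean-field equation `i ∂ₜ φ(t) = h^{φ(t)} φ(t)`
(coefficientwise, with `φ(t) ∈ ℓ²` and finite number of particles). -/
def IsMFSolution (J μ U : ℝ) (φ : ℝ → Seq) : Prop :=
  (∀ t, MemL2 (φ t)) ∧ (∀ t, MemNmom 1 (φ t)) ∧
    ∀ t n, HasDerivAt (fun s => φ s n) (-Complex.I * hMF J μ U (φ t) (φ t) n) t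

/-! ## The truncated mean-field dynamics -/

/-- The eigenvalue of the linear operator `A = (J-μ)𝒩 + (U/2)𝒩(𝒩-1)` on `|n⟩`. -/
def Acoef (J μ U : ℝ) (n : ℕ) : ℂ :=
  ((J : ℂ) - (μ : ℂ)) * (n : ℂ) + ((U : ℂ) / 2) * (n : ℂ) * ((n : ℂ) - 1)

/-- The linear operator `A = (J-μ)𝒩 + (U/2)𝒩(𝒩-1)`. -/
def opALin (J μ U : ℝ) (ψ : Seq) : Seq := fun n => Acoef J μ U n * ψ n

/-- The unitary group `e^{-itA}` generated by `A`. -/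
def expA (J μ U : ℝ) (t : ℝ) (φ : Seq) : Seq :=
  fun n => Complex.exp (-Complex.I * (t : ℂ) * Acoef J μ U n) * φ n

/-- The truncated annihilation operator `a_M = a 1_{𝒩 ≤ M}`. -/
def opAM (M : ℝ) (φ : Seq) : Seq :=
  fun n => if (n : ℝ) + 1 ≤ M then (Real.sqrt ((n : ℝ) + 1) : ℂ) * φ (n + 1) else 0

/-- The truncated creation operator `a*_M = 1_{𝒩 ≤ M} a*`. -/
def opAdM (M : ℝ) (φ : Seq) : Seq := fun n => if (n : ℝ) ≤ M then opAd φ n else 0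

/-- The truncated order parameter `α_M = ⟨φ, a_M φ⟩`. -/
def alphaM (M : ℝ) (φ : Seq) : ℂ := sInner φ (opAM M φ)

/-- The truncated nonlinearity `F_M(φ) = -J(α_M a*_M + conj α_M a_M - |α_M|²) φ`. -/
def FM (J M : ℝ) (φ : Seq) : Seq := fun n =>
  (-(J : ℂ)) * (alphaM M φ * opAdM M φ n + conj (alphaM M φ) * opAM M φ n
    - ((‖alphaM M φ‖ : ℂ)) ^ 2 * φ n)

/-- The truncated mean-field operator `h_M^{α_M(φ)} = A - J(α_M a*_M + conj α_M a_M - |α_M|²)`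
applied to `ψ`. -/
def hTrunc (J μ U M : ℝ) (φ ψ : Seq) : Seq := fun n =>
  opALin J μ U ψ n + (-(J : ℂ)) * (alphaM M φ * opAdM M ψ n + conj (alphaM M φ) * opAM M ψ n
    - ((‖alphaM M φ‖ : ℂ)) ^ 2 * ψ n)

/-- Differentiability in the `ℓ²` sense at time `t`, with derivative `v`. -/
def HasL2DerivAt (φ : ℝ → Seq) (v : Seq) (t : ℝ) : Prop :=
  Tendsto (fun h : ℝ => sNormSq (fun n => (φ (t + h) n - φ t n) / (h : ℂ) - v n))
    (nhdsWithin 0 {(0 : ℝ)}ᶜ) (nhds 0)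

/-- `φ : ℝ → Seq` is a (global, strong) solution of the truncated mean-field equation
`i ∂ₜ φ_M = A φ_M + F_M(φ_M)`, taking values in `D(𝒩²)`. -/
def IsTruncSolution (J μ U M : ℝ) (φ : ℝ → Seq) : Prop :=
  (∀ t, MemDomN 2 (φ t)) ∧
    ∀ t, HasL2DerivAt φ (fun n => -Complex.I * hTrunc J μ U M (φ t) (φ t) n) t

/-- Continuity of `t ↦ φ(t)` in the norm of `D(𝒩²)`. -/
def ContinuousInDom2 (φ : ℝ → Seq) : Prop :=
  ∀ t, Tendsto (fun s =>
      sNormSq (fun n => φ s n - φ t n) + sNormSq (fun n => ((n : ℂ)) ^ 2 * (φ s n - φ t n)))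
    (nhds t) (nhds 0)

/-- Continuity of `t ↦ v(t)` in the `ℓ²` norm. -/
def ContinuousInL2 (v : ℝ → Seq) : Prop :=
  ∀ t, Tendsto (fun s => sNormSq (fun n => v s n - v t n)) (nhds t) (nhds 0)

/-- The (untruncated) nonlinearity `F(φ) = -J(α_φ a* + conj α_φ a - |α_φ|²) φ`. -/
def Ffull (J : ℝ) (φ : Seq) : Seq := fun n =>
  (-(J : ℂ)) * (alphaOf φ * opAd φ n + conj (alphaOf φ) * opA φ n
    - ((‖alphaOf φ‖ : ℂ)) ^ 2 * φ n)

/-! ## Operators on ℓ²(ℂ), given by their kernels (matrices) in the canonical basis -/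

/-- The identity kernel. -/
def idKer : ℕ → ℕ → ℂ := fun m n => if m = n then 1 else 0

/-- The kernel of the rank-one projection `p_φ = |φ⟩⟨φ|`. -/
def projKer (φ : Seq) : ℕ → ℕ → ℂ := fun m n => φ m * conj (φ n)

/-- The kernel of `q_φ = 1 - p_φ`. -/
def qKer (φ : Seq) : ℕ → ℕ → ℂ := fun m n => idKer m n - projKer φ m n

/-- The product of two kernels. -/
def kerMul (A B : ℕ → ℕ → ℂ) : ℕ → ℕ → ℂ := fun m n => ∑' k, A m k * B k n

/-- The trace of a kernel. -/
def kerTr (A : ℕ → ℕ → ℂ) : ℂ := ∑' m, A m m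

/-- A kernel is positive semidefinite: hermitian with nonnegative quadratic form. -/
def kerPosSemidef (γ : ℕ → ℕ → ℂ) : Prop :=
  (∀ m n, γ n m = conj (γ m n)) ∧
    ∀ v : ℕ →₀ ℂ, 0 ≤ (∑ m ∈ v.support, ∑ n ∈ v.support, conj (v m) * γ m n * v n).re

/-- `c` is a bound for the operator norm of the kernel `B`. -/
def kerOpNormBound (B : ℕ → ℕ → ℂ) (c : ℝ) : Prop :=
  ∀ v w : ℕ →₀ ℂ,
    ‖∑ m ∈ v.support, ∑ n ∈ w.support, conj (v m) * B m n * w n‖ ≤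
      c * Real.sqrt (∑ m ∈ v.support, ‖v m‖ ^ 2) * Real.sqrt (∑ n ∈ w.support, ‖w n‖ ^ 2)

/-- The operator norm of a kernel. -/
def kerOpNorm (B : ℕ → ℕ → ℂ) : ℝ := sInf {c | 0 ≤ c ∧ kerOpNormBound B c}

/-- The trace norm `‖T‖_{L¹}`, via duality with bounded operators:
`‖T‖₁ = sup { |Tr(T B)| : ‖B‖ ≤ 1 }`. -/
def traceNorm (T : ℕ → ℕ → ℂ) : ℝ :=
  sSup {r | ∃ B z, kerOpNormBound B 1 ∧
      HasSum (fun q : ℕ × ℕ => T q.1 q.2 * B q.2 q.1) z ∧ r = ‖z‖}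

/-- The kernel of `q_φ g(𝒩) q_φ` for a diagonal operator `g(𝒩)`. -/
def qDiagq (g : ℕ → ℝ) (φ : Seq) : ℕ → ℕ → ℂ := fun m n =>
  (if m = n then ((g m : ℝ) : ℂ) else 0)
    - (((g m : ℝ) : ℂ) + ((g n : ℝ) : ℂ)) * (φ m * conj (φ n))
    + (∑' j, ((g j : ℝ) : ℂ) * ((‖φ j‖ : ℂ)) ^ 2) * (φ m * conj (φ n))

/-! ## The lattice `Λ = (ℤ/LZ)^d` and the Fock space `ℱ = ℓ²(ℂ)^{⊗|Λ|}` -/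

/-- A lattice site of `Λ = (ℤ/Lℤ)^d`. -/
abbrev Site (d L : ℕ) : Type := Fin d → ZMod L

/-- An occupation-number configuration, labeling the canonical basis of `ℱ`. -/
abbrev Cfg (d L : ℕ) : Type := Site d L → ℕ

/-- A vector of the Fock space `ℱ`, given by its coefficients. -/
abbrev FSeq (d L : ℕ) : Type := Cfg d L → ℂ

/-- The kernel of an operator on the Fock space `ℱ`. -/
abbrev FKer (d L : ℕ) : Type := Cfg d L → Cfg d L → ℂ

/-- Nearest neighbours in `Λ`. -/
def nbr {d L : ℕ} (x y : Site d L) : Prop :=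
  ∃ i : Fin d, y = Function.update x i (x i + 1) ∨ y = Function.update x i (x i - 1)

/-- The annihilation operator `a_x` at site `x`. -/
def fA {d L : ℕ} (x : Site d L) (ψ : FSeq d L) : FSeq d L :=
  fun n => (Real.sqrt ((n x : ℝ) + 1) : ℂ) * ψ (Function.update n x (n x + 1))

/-- The creation operator `a*_x` at site `x`. -/
def fAd {d L : ℕ} (x : Site d L) (ψ : FSeq d L) : FSeq d L :=
  fun n => ((Real.sqrt (n x : ℝ)) : ℂ) * ψ (Function.update n x (n x - 1))

open scoped Classical in
/-- The Bose–Hubbard Hamiltonian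
`H_d = -(J/2d) Σ_{⟨x,y⟩}(a*_x a_y + a*_y a_x) + Σ_x ((J-μ)𝒩_x + (U/2)𝒩_x(𝒩_x-1))`,
where the sum over unordered nearest-neighbour pairs of `a*_x a_y + a*_y a_x` is written as
the sum over ordered nearest-neighbour pairs of `a*_x a_y`. -/
def HBH (d L : ℕ) [NeZero L] (J μ U : ℝ) (ψ : FSeq d L) : FSeq d L := fun n =>
  (-(J : ℂ) / (2 * (d : ℂ))) *
      ∑ x : Site d L, ∑ y : Site d L, (if nbr x y then fAd x (fA y ψ) n else 0)
    + (∑ x : Site d L, Acoef J μ U (n x)) * ψ n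

/-- `Ψ : ℝ → FSeq d L` is a normalized solution of the Schrödinger equation
`i ∂ₜ Ψ = H_d Ψ` (coefficientwise). -/
def IsSchrodingerSolution (d L : ℕ) [NeZero L] (J μ U : ℝ) (Ψ : ℝ → FSeq d L) : Prop :=
  (∀ t, HasSum (fun n => ‖Ψ t n‖ ^ 2) 1) ∧
    ∀ t n, HasDerivAt (fun s => Ψ s n) (-Complex.I * HBH d L J μ U (Ψ t) n) t

/-- `γ : ℝ → FKer d L` solves the von Neumann equation `i ∂ₜ γ = [H_d, γ]`
(coefficientwise; we use that the matrix of `H_d` in the canonical basis is real symmetric). -/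
def IsVNSolution (d L : ℕ) [NeZero L] (J μ U : ℝ) (γ : ℝ → FKer d L) : Prop :=
  ∀ t m n, HasDerivAt (fun s => γ s m n)
    (-Complex.I * (HBH d L J μ U (fun k => γ t k n) m - HBH d L J μ U (fun k => γ t m k) n)) t

/-- A Fock-space kernel is positive semidefinite. -/
def FKerPosSemidef {d L : ℕ} (γ : FKer d L) : Prop :=
  (∀ m n, γ n m = conj (γ m n)) ∧
    ∀ v : Cfg d L →₀ ℂ, 0 ≤ (∑ m ∈ v.support, ∑ n ∈ v.support, conj (v m) * γ m n * v n).re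

/-- (Diagonal) trace-class condition for a positive Fock-space kernel. -/
def FKerTraceClass {d L : ℕ} (γ : FKer d L) : Prop := Summable fun n => (γ n n).re

/-- The kernel has trace one. -/
def FKerTraceOne {d L : ℕ} (γ : FKer d L) : Prop := HasSum (fun n => γ n n) 1

/-- The one-lattice-site reduced density matrix
`γ^{(1)} = (1/|Λ|) Σ_{x∈Λ} Tr_{Λ∖{x}} γ`, as a kernel on `ℕ`. -/
def reduced1 (d L : ℕ) [NeZero L] (γ : FKer d L) : ℕ → ℕ → ℂ := fun j k =>
  (1 / ((L : ℂ) ^ d)) * ∑ x : Site d L,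
    ∑' c : Cfg d L, if c x = 0 then γ (Function.update c x j) (Function.update c x k) else 0

/-- The trace `Tr(γ H_d)` (using that the matrix of `H_d` is real symmetric). -/
def trGammaH (d L : ℕ) [NeZero L] (J μ U : ℝ) (γ : FKer d L) : ℂ :=
  ∑' n : Cfg d L, HBH d L J μ U (fun k => γ n k) n

/-! ## Wave-function expressions on Fock space -/

/-- The inner product on Fock space. -/
def fInner {d L : ℕ} (Φ Ψ : FSeq d L) : ℂ := ∑' n, conj (Φ n) * Ψ n

/-- The projection `p_x = |φ⟩⟨φ|` acting at site `x`. -/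
def fP {d L : ℕ} (φ : Seq) (x : Site d L) (ψ : FSeq d L) : FSeq d L :=
  fun n => φ (n x) * ∑' k, conj (φ k) * ψ (Function.update n x k)

/-- The complementary projection `q_x = 1 - p_x` acting at site `x`. -/
def fQ {d L : ℕ} (φ : Seq) (x : Site d L) (ψ : FSeq d L) : FSeq d L :=
  fun n => ψ n - fP φ x ψ n

/-- The mean-field operator `h^φ_x` acting at site `x`. -/
def fHmf {d L : ℕ} (J μ U : ℝ) (φ : Seq) (x : Site d L) (ψ : FSeq d L) : FSeq d L :=
  fun n => (-(J : ℂ)) * (alphaOf φ * fAd x ψ n + conj (alphaOf φ) * fA x ψ n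
      - ((‖alphaOf φ‖ : ℂ)) ^ 2 * ψ n)
    + Acoef J μ U (n x) * ψ n

/-- `K^{(2)}_{x,y} = a*_x a_y + a*_y a_x`. -/
def fK2 {d L : ℕ} (x y : Site d L) (ψ : FSeq d L) : FSeq d L :=
  fun n => fAd x (fA y ψ) n + fAd y (fA x ψ) n

/-- `K^{(3)}_{x,y} = K^{(2)}_{x,y} - α_φ a*_x - conj α_φ a_x`. -/
def fK3 {d L : ℕ} (φ : Seq) (x y : Site d L) (ψ : FSeq d L) : FSeq d L :=
  fun n => fK2 x y ψ n - alphaOf φ * fAd x ψ n - conj (alphaOf φ) * fA x ψ n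

/-- `K^{(4)}_{x,y} = K^{(3)}_{x,y} - α_φ a*_y - conj α_φ a_y + 2|α_φ|²`. -/
def fK4 {d L : ℕ} (φ : Seq) (x y : Site d L) (ψ : FSeq d L) : FSeq d L :=
  fun n => fK3 φ x y ψ n - alphaOf φ * fAd y ψ n - conj (alphaOf φ) * fA y ψ n
    + 2 * ((‖alphaOf φ‖ : ℂ)) ^ 2 * ψ n

open scoped Classical in
/-- The expectation `⟨Ψ, H̃ Ψ⟩` of the excitation Hamiltonian `H̃`; sums over unordered
nearest-neighbour pairs are written as half the sums over ordered pairs, and `+h.c.`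
contributes a factor `2 Re`. -/
def tildeHExp (d L : ℕ) [NeZero L] (J : ℝ) (φ : Seq) (Ψ : FSeq d L) : ℝ :=
  (-(J / (2 * d))) * (1 / 2) *
      ∑ x : Site d L, ∑ y : Site d L, (if nbr x y then
        2 * (fInner Ψ (fP φ x (fP φ y (fK2 x y (fQ φ x (fQ φ y Ψ)))))).re
          + 2 * (fInner Ψ (fP φ x (fQ φ y (fK2 x y (fQ φ x (fP φ y Ψ)))))).re
        else 0)
    + (-(J / d)) * (1 / 2) *
      ∑ x : Site d L, ∑ y : Site d L, (if nbr x y then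
        2 * (fInner Ψ (fP φ x (fQ φ y (fK3 φ x y (fQ φ x (fQ φ y Ψ)))))).re else 0)
    + (-(J / (2 * d))) * (1 / 2) *
      ∑ x : Site d L, ∑ y : Site d L, (if nbr x y then
        (fInner Ψ (fQ φ x (fQ φ y (fK4 φ x y (fQ φ x (fQ φ y Ψ)))))).re else 0)

/-- The quantity `g(t) = (1/|Λ|) Σ_x ⟨Ψ, (q_x 𝒩_x² q_x + q_x) Ψ⟩`. -/
def gFunc (d L : ℕ) [NeZero L] (φ : Seq) (Ψ : FSeq d L) : ℝ :=
  (1 / (L : ℝ) ^ d) * ∑ x : Site d L,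
    ((fInner Ψ (fQ φ x (fun n => ((n x : ℂ)) ^ 2 * fQ φ x Ψ n))).re
      + (fInner Ψ (fQ φ x Ψ)).re)

/-- The quantity `f(t) = (1/|Λ|) ⟨Ψ, (H_d + Σ_x (q_x h^φ_x q_x - h^φ_x + c q_x)) Ψ⟩`. -/
def fFunc (d L : ℕ) [NeZero L] (J μ U c : ℝ) (φ : Seq) (Ψ : FSeq d L) : ℝ :=
  (1 / (L : ℝ) ^ d) * (fInner Ψ (fun n => HBH d L J μ U Ψ n +
    ∑ x : Site d L,
      (fQ φ x (fHmf J μ U φ x (fQ φ x Ψ)) n - fHmf J μ U φ x Ψ n + (c : ℂ) * fQ φ x Ψ n))).re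

/-- The time-dependent constant `C̃(s)` in the Gronwall estimate for `f`. -/
def Ctilde (J U C1 : ℝ) (φ0 : Seq) (s : ℝ) : ℝ :=
  (C1 / U) * (1 + 1 / U + (Nmom 1 φ0) ^ 2) *
    (1 + ∑ j ∈ Finset.range 7,
      (8 * J * Real.sqrt (Nmom 1 φ0)) ^ j * NmomShift (4 - (j : ℝ) / 2) j φ0 * s ^ j
        / (Nat.factorial j))

/-! ### Auxiliary development for the conservation laws -/

section Aux

open Finset

variable {J μ U M : ℝ}

/-- Real value of `Acoef`. -/
def realA (J μ U : ℝ) (n : ℕ) : ℝ := (J - μ) * n + U / 2 * n * ((n : ℝ) - 1)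

lemma Acoef_eq (J μ U : ℝ) (n : ℕ) : Acoef J μ U n = ((realA J μ U n : ℝ) : ℂ) := by
  simp only [Acoef, realA]
  push_cast
  ring

lemma realA_abs_le (J μ U : ℝ) (n : ℕ) :
    |realA J μ U n| ≤ (|J - μ| + |U| / 2) * ((n : ℝ) ^ 2 + 1) := by
  have hn : (0:ℝ) ≤ (n:ℝ) := Nat.cast_nonneg n
  have key : |(n:ℝ) * ((n:ℝ) - 1)| ≤ (n:ℝ)^2 + 1 := by
    rcases Nat.eq_zero_or_pos n with h | h
    · simp [h]
    · have h1 : (1:ℝ) ≤ (n:ℝ) := by exact_mod_cast h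
      rw [_root_.abs_of_nonneg (by nlinarith : (0:ℝ) ≤ (n:ℝ) * ((n:ℝ) - 1))]
      nlinarith
  have key2 : |(n:ℝ)| ≤ (n:ℝ)^2 + 1 := by
    rw [_root_.abs_of_nonneg hn]; nlinarith
  have habs : |realA J μ U n| ≤ |J - μ| * |(n:ℝ)| + |U|/2 * |(n:ℝ)*((n:ℝ)-1)| := by
    unfold realA
    calc |(J - μ) * (n:ℝ) + U / 2 * (n:ℝ) * ((n : ℝ) - 1)|
        ≤ |(J - μ) * (n:ℝ)| + |U / 2 * (n:ℝ) * ((n:ℝ) - 1)| := abs_add_le _ _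
      _ = |J - μ| * |(n:ℝ)| + |U|/2 * |(n:ℝ)*((n:ℝ)-1)| := by
          rw [abs_mul, show U / 2 * (n:ℝ) * ((n:ℝ)-1) = U/2 * ((n:ℝ)*((n:ℝ)-1)) by ring,
            abs_mul, abs_div, _root_.abs_two]
  have m1 := mul_le_mul_of_nonneg_left key2 (abs_nonneg (J-μ))
  have m2 := mul_le_mul_of_nonneg_left key (by positivity : (0:ℝ) ≤ |U|/2)
  nlinarith

lemma sq_add_le (a b : ℂ) : ‖a + b‖ ^ 2 ≤ 2 * ‖a‖ ^ 2 + 2 * ‖b‖ ^ 2 := by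
  have h := norm_add_le a b
  have h2 : ‖a + b‖^2 ≤ (‖a‖ + ‖b‖)^2 := by
    have := norm_nonneg (a + b)
    nlinarith [norm_nonneg a, norm_nonneg b]
  nlinarith [sq_nonneg (‖a‖ - ‖b‖)]

lemma SummableSq.add {f g : Seq} (hf : Summable fun n => ‖f n‖ ^ 2)
    (hg : Summable fun n => ‖g n‖ ^ 2) : Summable fun n => ‖f n + g n‖ ^ 2 := by
  refine Summable.of_nonneg_of_le (fun n => by positivity) (fun n => sq_add_le _ _) ?_
  exact ((hf.mul_left 2).add (hg.mul_left 2))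

lemma SummableSq.const_mul {f : Seq} (c : ℂ) (hf : Summable fun n => ‖f n‖ ^ 2) :
    Summable fun n => ‖c * f n‖ ^ 2 := by
  exact (hf.mul_left (‖c‖^2)).congr fun n => by rw [norm_mul]; ring

lemma SummableSq.neg {f : Seq} (hf : Summable fun n => ‖f n‖ ^ 2) :
    Summable fun n => ‖-f n‖ ^ 2 := by simpa using hf

/-- `Summable n^4 ‖φ n‖²` from `MemDomN 2`. -/
lemma mem4 {φ : Seq} (h : MemDomN 2 φ) : Summable fun n : ℕ => (n : ℝ) ^ 4 * ‖φ n‖ ^ 2 := by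
  have h2 := h.2
  unfold MemNmom at h2
  convert h2 using 2 with n
  rw [show ((2:ℝ) * 2) = ((4:ℕ):ℝ) by norm_num, Real.rpow_natCast]

lemma summable_nsq {φ : Seq} (h : MemDomN 2 φ) :
    Summable fun n : ℕ => ((n : ℝ) ^ 2 + 1) * ‖φ n‖ ^ 2 := by
  refine Summable.of_nonneg_of_le (fun n => by positivity) (fun n => ?_)
    ((mem4 h).add h.1)
  have hb : (n:ℝ)^2 + 1 ≤ (n:ℝ)^4 + 1 := by
    have : (n:ℝ)^2 ≤ (n:ℝ)^4 := by
      rcases Nat.eq_zero_or_pos n with hn | hn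
      · simp [hn]
      · have h1 : (1:ℝ) ≤ (n:ℝ) := by exact_mod_cast hn
        calc (n:ℝ)^2 = (n:ℝ)^2 * 1 := by ring
          _ ≤ (n:ℝ)^2 * (n:ℝ)^2 := by
            have h2 : (1:ℝ) ≤ (n:ℝ)^2 := by nlinarith
            exact mul_le_mul_of_nonneg_left h2 (by positivity)
          _ = (n:ℝ)^4 := by ring
    linarith
  have := sq_nonneg ‖φ n‖
  nlinarith [norm_nonneg (φ n), sq_nonneg (‖φ n‖)]

lemma summable_n1 {φ : Seq} (h : MemDomN 2 φ) :
    Summable fun n : ℕ => (n : ℝ) * ‖φ n‖ ^ 2 := by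
  refine Summable.of_nonneg_of_le (fun n => by positivity) (fun n => ?_) (summable_nsq h)
  have : (n:ℝ) ≤ (n:ℝ)^2 + 1 := by nlinarith [Nat.cast_nonneg (α := ℝ) n]
  nlinarith [sq_nonneg ‖φ n‖]

lemma summable_realA {φ : Seq} (h : MemDomN 2 φ) :
    Summable fun n : ℕ => realA J μ U n * ‖φ n‖ ^ 2 := by
  refine Summable.of_norm ?_
  refine Summable.of_nonneg_of_le (fun n => norm_nonneg _) (fun n => ?_)
    ((summable_nsq h).mul_left (|J - μ| + |U| / 2))
  rw [Real.norm_eq_abs, abs_mul, _root_.abs_of_nonneg (by positivity : (0:ℝ) ≤ ‖φ n‖^2)]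
  have h1 := realA_abs_le J μ U n
  have h2 : (0:ℝ) ≤ ‖φ n‖^2 := by positivity
  calc |realA J μ U n| * ‖φ n‖^2 ≤ ((|J - μ| + |U| / 2) * ((n : ℝ) ^ 2 + 1)) * ‖φ n‖^2 :=
        mul_le_mul_of_nonneg_right h1 h2
    _ = (|J - μ| + |U| / 2) * (((n : ℝ) ^ 2 + 1) * ‖φ n‖ ^ 2) := by ring

end Aux
section Aux2

open Finset Filter

variable {J μ U M : ℝ}

/-- Cutoff index: all truncated operators vanish at indices `≥ KM M`. -/
def KM (M : ℝ) : ℕ := ⌈M⌉₊ + 1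

lemma lt_KM_of_le {n : ℕ} (h : (n : ℝ) ≤ M) : n < KM M := by
  have h1 : (n : ℝ) ≤ (⌈M⌉₊ : ℝ) := h.trans (Nat.le_ceil M)
  have : n ≤ ⌈M⌉₊ := by exact_mod_cast h1
  unfold KM; omega

lemma lt_ceil_of_cnd {n : ℕ} (h : (n : ℝ) + 1 ≤ M) : n < ⌈M⌉₊ := by
  have : (n : ℝ) < M := by linarith
  exact Nat.lt_ceil.mpr this

lemma opAM_eq_zero {φ : Seq} {n : ℕ} (h : ¬ n < KM M) : opAM M φ n = 0 := by
  rw [opAM, if_neg]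
  intro hc
  exact h (lt_KM_of_le (by linarith))

lemma opAdM_eq_zero {φ : Seq} {n : ℕ} (h : ¬ n < KM M) : opAdM M φ n = 0 := by
  rw [opAdM, if_neg]
  intro hc
  exact h (lt_KM_of_le hc)

lemma not_cnd_ceil : ¬ ((⌈M⌉₊ : ℝ) + 1 ≤ M) := by
  intro h
  have := Nat.le_ceil M
  linarith

/-- `α_M(φ)` as a finite sum. -/
lemma alphaM_eq_sum (M : ℝ) (φ : Seq) :
    alphaM M φ = ∑ n ∈ range (KM M),
      (if (n : ℝ) + 1 ≤ M then ((Real.sqrt ((n:ℝ)+1) : ℝ) : ℂ) * ((starRingEnd ℂ) (φ n) * φ (n+1))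
       else 0) := by
  rw [alphaM, sInner]
  rw [tsum_eq_sum (s := range (KM M)) (fun n hn => by
    rw [opAM_eq_zero (by simpa using hn), mul_zero])]
  refine Finset.sum_congr rfl fun n _ => ?_
  rw [opAM]
  split_ifs with h
  · ring
  · rw [mul_zero]

end Aux2
section Aux3

open Finset Filter

variable {J μ U M : ℝ}

lemma hTrunc_self_eq (J μ U M : ℝ) (φ : Seq) (n : ℕ) :
    hTrunc J μ U M φ φ n = Acoef J μ U n * φ n + FM J M φ n := rfl

lemma FM_memL2 {φ : Seq} (hφ : MemDomN 2 φ) (J : ℝ) :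
    Summable fun n => ‖FM J M φ n‖ ^ 2 := by
  have h1 : Summable fun n =>
      ‖(-(J:ℂ)) * (alphaM M φ * opAdM M φ n + (starRingEnd ℂ) (alphaM M φ) * opAM M φ n)‖^2 := by
    apply summable_of_ne_finset_zero (s := range (KM M))
    intro n hn
    rw [opAdM_eq_zero (by simpa using hn), opAM_eq_zero (by simpa using hn)]
    simp
  have h2 : Summable fun n => ‖(-(J:ℂ)) * (-(((‖alphaM M φ‖ : ℝ):ℂ)) ^ 2 * φ n)‖^2 :=
    SummableSq.const_mul _ (SummableSq.const_mul _ hφ.1)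
  refine (SummableSq.add h1 h2).congr fun n => ?_
  congr 1
  unfold FM
  ring

lemma summable_A2 {φ : Seq} (hφ : MemDomN 2 φ) (J μ U : ℝ) :
    Summable fun n => ‖Acoef J μ U n * φ n‖ ^ 2 := by
  set C := |J - μ| + |U| / 2 with hC
  have hC0 : 0 ≤ C := by positivity
  refine Summable.of_nonneg_of_le (fun n => by positivity) (fun n => ?_)
    (((mem4 hφ).add hφ.1).mul_left (3 * C^2))
  rw [Acoef_eq, norm_mul, Complex.norm_real, Real.norm_eq_abs, mul_pow]
  have h1 := realA_abs_le J μ U n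
  have h2 : |realA J μ U n|^2 ≤ C^2 * ((n:ℝ)^2+1)^2 := by
    rw [← mul_pow]
    exact pow_le_pow_left₀ (abs_nonneg _) h1 2
  have h3 : ((n:ℝ)^2+1)^2 ≤ 3 * ((n:ℝ)^4 + 1) := by
    have h4 : (n:ℝ)^2 ≤ (n:ℝ)^4 + 1 := by
      rcases Nat.eq_zero_or_pos n with hn | hn
      · simp [hn]
      · have h1 : (1:ℝ) ≤ (n:ℝ) := by exact_mod_cast hn
        have h2 : (1:ℝ) ≤ (n:ℝ)^2 := by nlinarith
        nlinarith
    nlinarith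
  have h5 : (0:ℝ) ≤ ‖φ n‖^2 := by positivity
  calc |realA J μ U n|^2 * ‖φ n‖^2 ≤ (C^2 * (3 * ((n:ℝ)^4+1))) * ‖φ n‖^2 := by
        apply mul_le_mul_of_nonneg_right _ h5
        calc |realA J μ U n|^2 ≤ C^2 * ((n:ℝ)^2+1)^2 := h2
          _ ≤ C^2 * (3 * ((n:ℝ)^4+1)) := by
              exact mul_le_mul_of_nonneg_left h3 (by positivity)
    _ = 3 * C^2 * ((n:ℝ)^4 * ‖φ n‖^2 + ‖φ n‖^2) := by ring

lemma hTrunc_memL2 {φ : Seq} (hφ : MemDomN 2 φ) (J μ U : ℝ) :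
    Summable fun n => ‖hTrunc J μ U M φ φ n‖ ^ 2 := by
  refine (SummableSq.add (summable_A2 hφ J μ U) (FM_memL2 (M:=M) hφ J)).congr fun n => ?_
  rw [hTrunc_self_eq]

lemma coeff_hasDerivAt {φM : ℝ → Seq} (hsol : IsTruncSolution J μ U M φM) (t : ℝ) (n : ℕ) :
    HasDerivAt (fun s => φM s n) (-Complex.I * hTrunc J μ U M (φM t) (φM t) n) t := by
  obtain ⟨hdom, hder⟩ := hsol
  set v : Seq := fun m => -Complex.I * hTrunc J μ U M (φM t) (φM t) m with hv
  have hvL2 : Summable fun m => ‖v m‖ ^ 2 := SummableSq.const_mul _ (hTrunc_memL2 (hdom t) J μ U)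
  have key : Tendsto (fun h : ℝ => ‖(φM (t+h) n - φM t n) / (h:ℂ) - v n‖^2)
      (nhdsWithin (0:ℝ) {(0:ℝ)}ᶜ) (nhds 0) := by
    refine squeeze_zero' (eventually_nhdsWithin_of_forall (fun h _ => by positivity))
      (eventually_nhdsWithin_of_forall (fun h _ => ?_)) (hder t)
    have hs : Summable fun m => ‖(φM (t+h) m - φM t m) / (h:ℂ) - v m‖^2 := by
      have hcomb : Summable fun m =>
          ‖(((h:ℂ)⁻¹ * φM (t+h) m + (-(h:ℂ)⁻¹) * φM t m) + (-1:ℂ) * v m)‖^2 :=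
        SummableSq.add (SummableSq.add (SummableSq.const_mul _ (hdom (t+h)).1)
          (SummableSq.const_mul _ (hdom t).1)) (SummableSq.const_mul _ hvL2)
      refine hcomb.congr fun m => ?_
      congr 1
      ring
    exact Summable.le_tsum hs n (fun j _ => by positivity)
  have key2 : Tendsto (fun h : ℝ => (φM (t+h) n - φM t n) / (h:ℂ))
      (nhdsWithin (0:ℝ) {(0:ℝ)}ᶜ) (nhds (v n)) := by
    rw [tendsto_iff_norm_sub_tendsto_zero]
    have hsq : Tendsto (fun h : ℝ => Real.sqrt (‖(φM (t+h) n - φM t n)/(h:ℂ) - v n‖^2))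
        (nhdsWithin (0:ℝ) {(0:ℝ)}ᶜ) (nhds (Real.sqrt 0)) :=
      (Real.continuous_sqrt.tendsto 0).comp key
    simpa [Real.sqrt_sq (norm_nonneg _)] using hsq
  rw [hasDerivAt_iff_tendsto_slope]
  have hmap : Filter.map (fun h : ℝ => t + h) (nhdsWithin (0:ℝ) {(0:ℝ)}ᶜ)
      = nhdsWithin t {t}ᶜ := by
    have := (Homeomorph.addLeft t).map_punctured_nhds_eq 0
    simpa using this
  rw [← hmap, tendsto_map'_iff]
  refine key2.congr fun h => ?_
  show (φM (t+h) n - φM t n) / (h:ℂ) = slope (fun s => φM s n) t (t + h)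
  rw [slope]
  simp only [vsub_eq_sub, add_sub_cancel_left]
  rw [Complex.real_smul, Complex.ofReal_inv]
  ring

end Aux3
section Aux4

open Finset Filter

variable {J μ U M : ℝ}

lemma conj_mul_self (z : ℂ) : (starRingEnd ℂ) z * z = ((‖z‖ ^ 2 : ℝ) : ℂ) := by
  rw [show ‖z‖^2 = Complex.normSq z by rw [Complex.sq_norm],
    Complex.normSq_eq_conj_mul_self]

lemma hasDerivAt_norm_sq {f : ℝ → ℂ} {f' : ℂ} {t : ℝ} (hf : HasDerivAt f f' t) :
    HasDerivAt (fun s => ‖f s‖ ^ 2) (2 * ((starRingEnd ℂ) (f t) * f').re) t := by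
  have h1 : HasDerivAt (fun s => (starRingEnd ℂ) (f s) * f s)
      ((starRingEnd ℂ) f' * f t + (starRingEnd ℂ) (f t) * f') t := hf.star.mul hf
  have h2 := Complex.reCLM.hasFDerivAt.comp_hasDerivAt t h1
  convert h2 using 1
  · rfl
  · rfl
  · funext s
    have := conj_mul_self (f s)
    simp only [Complex.reCLM_apply, Function.comp]
    rw [this, Complex.ofReal_re]
  · simp only [Complex.reCLM_apply, Complex.add_re, Complex.mul_re,
      Complex.conj_re, Complex.conj_im]
    ring

/-- Derivative of a weighted partial sum of `‖φ(t)ₙ‖²` along the flow. -/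
lemma weighted_hasDerivAt {φM : ℝ → Seq} (hsol : IsTruncSolution J μ U M φM)
    (g : ℕ → ℝ) (K' : ℕ) (t : ℝ) :
    HasDerivAt (fun s => ∑ n ∈ range K', g n * ‖φM s n‖ ^ 2)
      (∑ n ∈ range K',
        (2 * g n) * ((starRingEnd ℂ) (φM t n) * hTrunc J μ U M (φM t) (φM t) n).im) t := by
  apply HasDerivAt.fun_sum
  intro n _
  have h1 := (hasDerivAt_norm_sq (coeff_hasDerivAt hsol t n)).const_mul (g n)
  convert h1 using 1
  · rfl
  set z := (starRingEnd ℂ) (φM t n)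
  set H := hTrunc J μ U M (φM t) (φM t) n
  have : (z * (-Complex.I * H)).re = (z * H).im := by
    simp [Complex.mul_re, Complex.mul_im]
    ring
  rw [this]
  ring

/-- Truncated sums `Y` and `Z` appearing in the conservation identities. -/
def YS (M : ℝ) (g : ℕ → ℝ) (φ : Seq) : ℂ :=
  ∑ n ∈ range (KM M), if (n:ℝ) + 1 ≤ M then
    ((g n : ℝ) : ℂ) * ((Real.sqrt ((n:ℝ)+1) : ℝ) : ℂ) * ((starRingEnd ℂ) (φ n) * φ (n+1))
    else 0

def ZS (M : ℝ) (g : ℕ → ℝ) (φ : Seq) : ℂ :=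
  ∑ n ∈ range (KM M), if (n:ℝ) + 1 ≤ M then
    ((g (n+1) : ℝ) : ℂ) * ((Real.sqrt ((n:ℝ)+1) : ℝ) : ℂ) * ((starRingEnd ℂ) (φ n) * φ (n+1))
    else 0

lemma YS_one (φ : Seq) : YS M (fun _ => 1) φ = alphaM M φ := by
  rw [YS, alphaM_eq_sum]
  refine Finset.sum_congr rfl fun n _ => ?_
  split_ifs with h
  · push_cast; ring
  · rfl

lemma sum_opAM_eq {K' : ℕ} (hK : KM M ≤ K') (w : ℕ → ℝ) (φ : Seq) :
    ∑ n ∈ range K', ((w n : ℝ):ℂ) * ((starRingEnd ℂ) (φ n) * opAM M φ n) = YS M w φ := by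
  rw [YS, ← Finset.sum_subset (Finset.range_subset_range.mpr hK)
    (fun n _ hn => by rw [opAM_eq_zero (by simpa using hn), mul_zero, mul_zero])]
  refine Finset.sum_congr rfl fun n _ => ?_
  rw [opAM]
  split_ifs with h
  · ring
  · simp

lemma sum_opAdM_eq {K' : ℕ} (hK : KM M ≤ K') (w : ℕ → ℝ) (φ : Seq) :
    ∑ n ∈ range K', ((w n : ℝ):ℂ) * ((starRingEnd ℂ) (φ n) * opAdM M φ n)
      = (starRingEnd ℂ) (ZS M (fun n => w n) φ) := by
  rw [← Finset.sum_subset (Finset.range_subset_range.mpr hK)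
    (fun n _ hn => by rw [opAdM_eq_zero (by simpa using hn), mul_zero, mul_zero])]
  rw [ZS, map_sum]
  rw [show KM M = ⌈M⌉₊ + 1 from rfl]
  rw [Finset.sum_range_succ' (fun n => ((w n : ℝ):ℂ) * ((starRingEnd ℂ) (φ n) * opAdM M φ n)) _,
    Finset.sum_range_succ]
  have h0 : ((w 0 : ℝ):ℂ) * ((starRingEnd ℂ) (φ 0) * opAdM M φ 0) = 0 := by
    simp [opAdM, opAd]
  have hlast : (starRingEnd ℂ) (if ((⌈M⌉₊:ℕ):ℝ) + 1 ≤ M then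
      ((w (⌈M⌉₊+1) : ℝ):ℂ) * ((Real.sqrt (((⌈M⌉₊:ℕ):ℝ)+1) : ℝ) : ℂ)
        * ((starRingEnd ℂ) (φ ⌈M⌉₊) * φ (⌈M⌉₊+1)) else 0) = 0 := by
    rw [if_neg not_cnd_ceil, map_zero]
  rw [h0, hlast, add_zero, add_zero]
  refine Finset.sum_congr rfl fun k hk => ?_
  rw [opAdM, opAd]
  simp only [Nat.cast_add, Nat.cast_one, Nat.add_sub_cancel, apply_ite (starRingEnd ℂ),
    map_zero, map_mul, Complex.conj_conj, Complex.conj_ofReal, mul_ite, mul_zero]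
  split_ifs with h
  · ring
  · rfl

/-- Master identity: derivative of weighted sums in terms of `Y`, `Z`, `α`. -/
lemma master {K' : ℕ} (hK : KM M ≤ K') (w : ℕ → ℝ) (φ : Seq) (J μ U : ℝ) :
    ∑ n ∈ range K', w n * ((starRingEnd ℂ) (φ n) * hTrunc J μ U M φ φ n).im
      = (-(J:ℂ) * (alphaM M φ * (starRingEnd ℂ) (ZS M w φ)
          + (starRingEnd ℂ) (alphaM M φ) * YS M w φ)).im := by
  set α := alphaM M φ with hα
  have hterm : ∀ n, w n * ((starRingEnd ℂ) (φ n) * hTrunc J μ U M φ φ n).im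
      = ((((w n):ℝ):ℂ) * ((starRingEnd ℂ) (φ n) * hTrunc J μ U M φ φ n)).im := by
    intro n; rw [show (((w n):ℝ):ℂ) * ((starRingEnd ℂ) (φ n) * hTrunc J μ U M φ φ n)
      = ((w n : ℝ) : ℂ) * _ from rfl]
    simp [Complex.mul_im]
  rw [Finset.sum_congr rfl (fun n _ => hterm n), ← Complex.im_sum]
  have hW : ∑ n ∈ range K', (((w n):ℝ):ℂ) * ((starRingEnd ℂ) (φ n) * hTrunc J μ U M φ φ n)
      = ((∑ n ∈ range K', w n * realA J μ U n * ‖φ n‖^2 : ℝ) : ℂ)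
        + (-(J:ℂ)) * (α * (∑ n ∈ range K', ((w n:ℝ):ℂ) * ((starRingEnd ℂ) (φ n) * opAdM M φ n))
            + (starRingEnd ℂ) α * (∑ n ∈ range K', ((w n:ℝ):ℂ) * ((starRingEnd ℂ) (φ n) * opAM M φ n)))
        + (J:ℂ) * (((‖α‖:ℝ):ℂ))^2 * ((∑ n ∈ range K', w n * ‖φ n‖^2 : ℝ) : ℂ) := by
    simp only [Complex.ofReal_sum, mul_add, Finset.mul_sum, ← Finset.sum_add_distrib]
    refine Finset.sum_congr rfl fun n _ => ?_
    rw [show hTrunc J μ U M φ φ n = Acoef J μ U n * φ n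
        + (-(J:ℂ)) * (α * opAdM M φ n + (starRingEnd ℂ) α * opAM M φ n
          - (((‖α‖:ℝ):ℂ))^2 * φ n) from rfl]
    rw [Acoef_eq]
    have h1 : ((‖φ n‖:ℝ):ℂ)^2 = (starRingEnd ℂ) (φ n) * φ n := by
      rw [conj_mul_self]; push_cast; ring
    push_cast
    rw [h1]
    ring
  rw [hW, sum_opAdM_eq hK, sum_opAM_eq hK]
  have hc : (J:ℂ) * (((‖α‖:ℝ):ℂ))^2 * ((∑ n ∈ range K', w n * ‖φ n‖^2 : ℝ):ℂ)
      = ((J * ‖α‖^2 * (∑ n ∈ range K', w n * ‖φ n‖^2) : ℝ):ℂ) := by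
    push_cast; ring
  rw [hc]
  simp only [Complex.add_im, Complex.ofReal_im, add_zero, zero_add]

lemma im_reduce (J : ℝ) (a z y : ℂ) :
    (-(J:ℂ) * (a * (starRingEnd ℂ) z + (starRingEnd ℂ) a * y)).im
      = -J * ((starRingEnd ℂ) a * (y - z)).im := by
  simp only [Complex.mul_im, Complex.mul_re, Complex.add_im, Complex.add_re,
    Complex.sub_re, Complex.sub_im, Complex.neg_re, Complex.neg_im,
    Complex.conj_re, Complex.conj_im, Complex.ofReal_re, Complex.ofReal_im]
  ring

lemma YS_sub_ZS (w : ℕ → ℝ) (φ : Seq) :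
    YS M w φ - ZS M w φ = ∑ n ∈ range (KM M), if (n:ℝ) + 1 ≤ M then
      (((w n - w (n+1)) : ℝ) : ℂ) * ((Real.sqrt ((n:ℝ)+1) : ℝ) : ℂ)
        * ((starRingEnd ℂ) (φ n) * φ (n+1)) else 0 := by
  rw [YS, ZS, ← Finset.sum_sub_distrib]
  refine Finset.sum_congr rfl fun n _ => ?_
  split_ifs with h
  · push_cast; ring
  · simp

end Aux4
section Aux5

open Finset Filter

variable {J μ U M : ℝ}

lemma const_of_hasDerivAt_zero {f : ℝ → ℝ} (h : ∀ t, HasDerivAt f 0 t) (t : ℝ) :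
    f t = f 0 :=
  is_const_of_deriv_eq_zero (fun s => (h s).differentiableAt)
    (fun s => (h s).deriv) t 0

lemma ZS_two (φ : Seq) : ZS M (fun _ => (2:ℝ)) φ = YS M (fun _ => (2:ℝ)) φ := rfl

lemma im_w2_zero (φ : Seq) (J : ℝ) :
    (-(J:ℂ) * (alphaM M φ * (starRingEnd ℂ) (ZS M (fun _ => (2:ℝ)) φ)
      + (starRingEnd ℂ) (alphaM M φ) * YS M (fun _ => (2:ℝ)) φ)).im = 0 := by
  rw [im_reduce, ZS_two, sub_self, mul_zero, Complex.zero_im, mul_zero]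

lemma YS_sub_ZS_lin (φ : Seq) :
    YS M (fun n => 2 * (n:ℝ)) φ - ZS M (fun n => 2 * (n:ℝ)) φ
      = (-2:ℂ) * alphaM M φ := by
  rw [YS_sub_ZS, alphaM_eq_sum, Finset.mul_sum]
  refine Finset.sum_congr rfl fun n _ => ?_
  split_ifs with h
  · push_cast; ring
  · simp

lemma im_wn_zero (φ : Seq) (J : ℝ) :
    (-(J:ℂ) * (alphaM M φ * (starRingEnd ℂ) (ZS M (fun n => 2 * (n:ℝ)) φ)
      + (starRingEnd ℂ) (alphaM M φ) * YS M (fun n => 2 * (n:ℝ)) φ)).im = 0 := by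
  rw [im_reduce, YS_sub_ZS_lin]
  have : (starRingEnd ℂ) (alphaM M φ) * ((-2:ℂ) * alphaM M φ)
      = ((-2 * ‖alphaM M φ‖^2 : ℝ) : ℂ) := by
    rw [show (starRingEnd ℂ) (alphaM M φ) * ((-2:ℂ) * alphaM M φ)
        = (-2:ℂ) * ((starRingEnd ℂ) (alphaM M φ) * alphaM M φ) from by ring,
      conj_mul_self]
    push_cast; ring
  rw [this, Complex.ofReal_im, mul_zero]

/-- Norm partial sums are constant along the flow. -/
lemma partial_norm_const {φM : ℝ → Seq} (hsol : IsTruncSolution J μ U M φM)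
    {K' : ℕ} (hK : KM M ≤ K') (t : ℝ) :
    ∑ n ∈ range K', ‖φM t n‖ ^ 2 = ∑ n ∈ range K', ‖φM 0 n‖ ^ 2 := by
  have hderiv : ∀ s, HasDerivAt (fun r => ∑ n ∈ range K', ‖φM r n‖ ^ 2) 0 s := by
    intro s
    have h1 := weighted_hasDerivAt hsol (fun _ => 1) K' s
    have h2 : ∑ n ∈ range K', (2 * (1:ℝ)) *
        ((starRingEnd ℂ) (φM s n) * hTrunc J μ U M (φM s) (φM s) n).im = 0 := by
      rw [show (fun n : ℕ => (2 * (1:ℝ)) *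
          ((starRingEnd ℂ) (φM s n) * hTrunc J μ U M (φM s) (φM s) n).im)
        = (fun n : ℕ => (fun _ : ℕ => (2:ℝ)) n *
          ((starRingEnd ℂ) (φM s n) * hTrunc J μ U M (φM s) (φM s) n).im) from by
          funext n; norm_num]
      rw [master hK _ (φM s) J μ U]
      exact im_w2_zero (φM s) J
    rw [h2] at h1
    simpa using h1
  exact const_of_hasDerivAt_zero hderiv t

/-- Number partial sums are constant along the flow. -/
lemma partial_num_const {φM : ℝ → Seq} (hsol : IsTruncSolution J μ U M φM)
    {K' : ℕ} (hK : KM M ≤ K') (t : ℝ) :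
    ∑ n ∈ range K', (n:ℝ) * ‖φM t n‖ ^ 2 = ∑ n ∈ range K', (n:ℝ) * ‖φM 0 n‖ ^ 2 := by
  have hderiv : ∀ s, HasDerivAt (fun r => ∑ n ∈ range K', (n:ℝ) * ‖φM r n‖ ^ 2) 0 s := by
    intro s
    have h1 := weighted_hasDerivAt hsol (fun n => (n:ℝ)) K' s
    have h2 : ∑ n ∈ range K', (2 * (n:ℝ)) *
        ((starRingEnd ℂ) (φM s n) * hTrunc J μ U M (φM s) (φM s) n).im = 0 := by
      rw [master hK (fun n => 2 * (n:ℝ)) (φM s) J μ U]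
      exact im_wn_zero (φM s) J
    rw [h2] at h1
    exact h1
  exact const_of_hasDerivAt_zero hderiv t

end Aux5
section Aux6

open Finset Filter

variable {J μ U M : ℝ}

/-- The commutator-type sum `B` in the energy computation. -/
def BB (M J : ℝ) (φ : Seq) : ℂ :=
  ∑ n ∈ range (KM M), if (n:ℝ)+1 ≤ M then
    ((Real.sqrt ((n:ℝ)+1) : ℝ):ℂ) * ((starRingEnd ℂ) (FM J M φ n) * φ (n+1)
      - (starRingEnd ℂ) (φ n) * FM J M φ (n+1)) else 0

def PP (M : ℝ) (φ : Seq) : ℂ :=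
  ∑ n ∈ range (KM M), if (n:ℝ)+1 ≤ M then
    ((Real.sqrt ((n:ℝ)+1) : ℝ):ℂ) * ((starRingEnd ℂ) (opAdM M φ n) * φ (n+1)
      - (starRingEnd ℂ) (φ n) * opAM M φ (n+1)) else 0

def QQ (M : ℝ) (φ : Seq) : ℂ :=
  ∑ n ∈ range (KM M), if (n:ℝ)+1 ≤ M then
    ((Real.sqrt ((n:ℝ)+1) : ℝ):ℂ) * ((starRingEnd ℂ) (opAM M φ n) * φ (n+1)
      - (starRingEnd ℂ) (φ n) * opAdM M φ (n+1)) else 0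

lemma cnd_succ {n : ℕ} (h : ((n+1 : ℕ):ℝ) + 1 ≤ M) : (n:ℝ) + 1 ≤ M := by
  push_cast at h; linarith

lemma BB_eq (φ : Seq) (J : ℝ) :
    BB M J φ = -(J:ℂ) * ((starRingEnd ℂ) (alphaM M φ) * PP M φ + alphaM M φ * QQ M φ) := by
  rw [BB, PP, QQ, Finset.mul_sum, Finset.mul_sum, ← Finset.sum_add_distrib, Finset.mul_sum]
  refine Finset.sum_congr rfl fun n _ => ?_
  split_ifs with h
  · simp only [FM, map_mul, map_sub, map_add, map_neg, map_pow, Complex.conj_ofReal,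
      Complex.conj_conj]
    ring
  · simp

lemma PP_eq_zero (φ : Seq) : PP M φ = 0 := by
  rw [PP]
  have hsplit : ∀ n ∈ range (KM M),
      (if (n:ℝ)+1 ≤ M then ((Real.sqrt ((n:ℝ)+1) : ℝ):ℂ)
          * ((starRingEnd ℂ) (opAdM M φ n) * φ (n+1)
            - (starRingEnd ℂ) (φ n) * opAM M φ (n+1)) else 0)
      = (if (n:ℝ)+1 ≤ M then ((Real.sqrt ((n:ℝ)+1) : ℝ):ℂ)
          * ((starRingEnd ℂ) (opAdM M φ n) * φ (n+1)) else 0)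
        - (if (n:ℝ)+1 ≤ M then ((Real.sqrt ((n:ℝ)+1) : ℝ):ℂ)
          * ((starRingEnd ℂ) (φ n) * opAM M φ (n+1)) else 0) := by
    intro n _
    split_ifs with h
    · ring
    · simp
  rw [Finset.sum_congr rfl hsplit, Finset.sum_sub_distrib]
  have hA : ∑ n ∈ range (KM M), (if (n:ℝ)+1 ≤ M then ((Real.sqrt ((n:ℝ)+1) : ℝ):ℂ)
        * ((starRingEnd ℂ) (opAdM M φ n) * φ (n+1)) else 0)
      = ∑ n ∈ range (KM M), (if (n:ℝ)+1 ≤ M then ((Real.sqrt ((n:ℝ)+1) : ℝ):ℂ)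
        * ((starRingEnd ℂ) (φ n) * opAM M φ (n+1)) else 0) := by
    rw [show KM M = ⌈M⌉₊ + 1 from rfl]
    rw [Finset.sum_range_succ' (fun n => if (n:ℝ)+1 ≤ M then ((Real.sqrt ((n:ℝ)+1) : ℝ):ℂ)
        * ((starRingEnd ℂ) (opAdM M φ n) * φ (n+1)) else 0)]
    rw [Finset.sum_range_succ (fun n => if (n:ℝ)+1 ≤ M then ((Real.sqrt ((n:ℝ)+1) : ℝ):ℂ)
        * ((starRingEnd ℂ) (φ n) * opAM M φ (n+1)) else 0)]
    have h0 : (if ((0:ℕ):ℝ)+1 ≤ M then ((Real.sqrt (((0:ℕ):ℝ)+1) : ℝ):ℂ)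
        * ((starRingEnd ℂ) (opAdM M φ 0) * φ (0+1)) else 0) = 0 := by
      simp [opAdM, opAd]
    have hlast : (if ((⌈M⌉₊:ℕ):ℝ)+1 ≤ M then ((Real.sqrt (((⌈M⌉₊:ℕ):ℝ)+1) : ℝ):ℂ)
        * ((starRingEnd ℂ) (φ ⌈M⌉₊) * opAM M φ (⌈M⌉₊+1)) else 0) = 0 :=
      if_neg not_cnd_ceil
    rw [h0, hlast, add_zero, add_zero]
    refine Finset.sum_congr rfl fun k _ => ?_
    by_cases h1 : ((k+1 : ℕ):ℝ) + 1 ≤ M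
    · have h2 : (k:ℝ) + 1 ≤ M := cnd_succ h1
      have h3 : ((k+1 : ℕ):ℝ) ≤ M := by push_cast at h1 ⊢; linarith
      rw [if_pos h1, if_pos h2, opAdM, if_pos h3, opAd, opAM, if_pos h1]
      simp only [Nat.add_sub_cancel, map_mul, Complex.conj_ofReal]
      push_cast
      ring
    · rw [if_neg h1, opAM, if_neg h1]
      split_ifs with h2
      · simp
      · rfl
  rw [hA, sub_self]

lemma im_eq_zero_aux (a b : ℝ) (z w : ℂ) :
    ((a:ℂ) * ((a:ℂ) * (starRingEnd ℂ) z * z - (starRingEnd ℂ) w * ((b:ℂ) * w))).im = 0 := by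
  have h : (a:ℂ) * ((a:ℂ) * (starRingEnd ℂ) z * z - (starRingEnd ℂ) w * ((b:ℂ) * w))
      = ((a * (a * ‖z‖^2 - b * ‖w‖^2) : ℝ):ℂ) := by
    rw [show (a:ℂ) * ((a:ℂ) * (starRingEnd ℂ) z * z - (starRingEnd ℂ) w * ((b:ℂ) * w))
        = (a:ℂ) * ((a:ℂ) * ((starRingEnd ℂ) z * z) - (b:ℂ) * ((starRingEnd ℂ) w * w)) from by
        ring, conj_mul_self, conj_mul_self]
    push_cast
    ring
  rw [h]
  exact Complex.ofReal_im _

lemma QQ_im_zero (φ : Seq) : (QQ M φ).im = 0 := by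
  rw [QQ, Complex.im_sum]
  refine Finset.sum_eq_zero fun n _ => ?_
  by_cases h : (n:ℝ)+1 ≤ M
  · have h2 : ((n+1 : ℕ):ℝ) ≤ M := by push_cast; linarith
    rw [if_pos h, opAM, if_pos h, opAdM, if_pos h2, opAd]
    simp only [Nat.add_sub_cancel, map_mul, Complex.conj_ofReal]
    exact im_eq_zero_aux _ _ _ _
  · rw [if_neg h]
    rfl

end Aux6
section Aux7

open Finset Filter

variable {J μ U M : ℝ}

lemma alpha_hasDerivAt {φM : ℝ → Seq} (hsol : IsTruncSolution J μ U M φM) (t : ℝ) :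
    HasDerivAt (fun s => alphaM M (φM s))
      (Complex.I * ((YS M (realA J μ U) (φM t) - ZS M (realA J μ U) (φM t))
        + BB M J (φM t))) t := by
  have hfun : (fun s => alphaM M (φM s)) = fun s => ∑ n ∈ range (KM M),
      (if (n:ℝ)+1 ≤ M then ((Real.sqrt ((n:ℝ)+1) : ℝ):ℂ)
        * ((starRingEnd ℂ) (φM s n) * φM s (n+1)) else 0) := by
    funext s; exact alphaM_eq_sum M (φM s)
  rw [hfun]
  have hsum : HasDerivAt (fun s => ∑ n ∈ range (KM M),
      (if (n:ℝ)+1 ≤ M then ((Real.sqrt ((n:ℝ)+1) : ℝ):ℂ)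
        * ((starRingEnd ℂ) (φM s n) * φM s (n+1)) else 0))
      (∑ n ∈ range (KM M), (if (n:ℝ)+1 ≤ M then ((Real.sqrt ((n:ℝ)+1) : ℝ):ℂ)
        * ((starRingEnd ℂ) (-Complex.I * hTrunc J μ U M (φM t) (φM t) n) * φM t (n+1)
          + (starRingEnd ℂ) (φM t n)
            * (-Complex.I * hTrunc J μ U M (φM t) (φM t) (n+1))) else 0)) t := by
    apply HasDerivAt.fun_sum
    intro n _
    by_cases h : (n:ℝ)+1 ≤ M
    · simp only [if_pos h]
      exact (((coeff_hasDerivAt hsol t n).star.mul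
        (coeff_hasDerivAt hsol t (n+1))).const_mul _)
    · simp only [if_neg h]
      exact hasDerivAt_const t 0
  convert hsum using 1
  rw [YS_sub_ZS, BB, ← Finset.sum_add_distrib, Finset.mul_sum]
  refine Finset.sum_congr rfl fun n _ => ?_
  split_ifs with h
  · rw [show hTrunc J μ U M (φM t) (φM t) n
        = ((realA J μ U n : ℝ):ℂ) * φM t n + FM J M (φM t) n from by
        rw [← Acoef_eq]; rfl,
      show hTrunc J μ U M (φM t) (φM t) (n+1)
        = ((realA J μ U (n+1) : ℝ):ℂ) * φM t (n+1) + FM J M (φM t) (n+1) from by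
        rw [← Acoef_eq]; rfl]
    simp only [map_mul, map_add, map_neg, Complex.conj_ofReal, Complex.conj_I]
    push_cast
    ring
  · simp

/-- Energy partial sums are constant along the flow. -/
lemma partial_energy_const {φM : ℝ → Seq} (hsol : IsTruncSolution J μ U M φM)
    {K' : ℕ} (hK : KM M ≤ K') (t : ℝ) :
    ∑ n ∈ range K', realA J μ U n * ‖φM t n‖ ^ 2 - J * ‖alphaM M (φM t)‖ ^ 2
      = ∑ n ∈ range K', realA J μ U n * ‖φM 0 n‖ ^ 2 - J * ‖alphaM M (φM 0)‖ ^ 2 := by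
  have hderiv : ∀ s, HasDerivAt
      (fun r => ∑ n ∈ range K', realA J μ U n * ‖φM r n‖ ^ 2
        - J * ‖alphaM M (φM r)‖ ^ 2) 0 s := by
    intro s
    set α := alphaM M (φM s) with hαdef
    set D := YS M (realA J μ U) (φM s) - ZS M (realA J μ U) (φM s) with hD
    have h1 := weighted_hasDerivAt hsol (realA J μ U) K' s
    have h2 := (hasDerivAt_norm_sq (alpha_hasDerivAt hsol s)).const_mul J
    have h3 := h1.sub h2
    convert h3 using 1
    · rfl
    · rfl
    · rfl
    -- show 0 = D1 - J * (2 * Re(conj α * α'))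
    have hD1 : ∑ n ∈ range K', (2 * realA J μ U n) *
        ((starRingEnd ℂ) (φM s n) * hTrunc J μ U M (φM s) (φM s) n).im
        = -2 * J * ((starRingEnd ℂ) α * D).im := by
      rw [master hK (fun n => 2 * realA J μ U n) (φM s) J μ U, im_reduce]
      have hyz : YS M (fun n => 2 * realA J μ U n) (φM s)
          - ZS M (fun n => 2 * realA J μ U n) (φM s) = 2 * D := by
        rw [YS_sub_ZS, hD, YS_sub_ZS, Finset.mul_sum]
        refine Finset.sum_congr rfl fun n _ => ?_
        split_ifs with h
        · push_cast; ring
        · simp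
      rw [hyz]
      have : ((starRingEnd ℂ) α * (2 * D)).im = 2 * ((starRingEnd ℂ) α * D).im := by
        rw [show (starRingEnd ℂ) α * (2 * D) = 2 * ((starRingEnd ℂ) α * D) from by ring]
        simp [Complex.mul_im, Complex.mul_re]
      rw [this]
      ring
    have hRe : ((starRingEnd ℂ) α * (Complex.I * (D + BB M J (φM s)))).re
        = -((starRingEnd ℂ) α * D).im := by
      have hB : ((starRingEnd ℂ) α * BB M J (φM s)).im = 0 := by
        rw [BB_eq, PP_eq_zero, mul_zero, zero_add]
        rw [show (starRingEnd ℂ) α * (-(J:ℂ) * (α * QQ M (φM s)))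
            = -(J:ℂ) * (((starRingEnd ℂ) α * α) * QQ M (φM s)) from by ring,
          conj_mul_self]
        have := QQ_im_zero (M := M) (φM s)
        simp only [Complex.mul_im, Complex.mul_re, Complex.neg_re, Complex.neg_im,
          Complex.ofReal_re, Complex.ofReal_im, ← Complex.ofReal_pow, this]
        ring
      have : ((starRingEnd ℂ) α * (Complex.I * (D + BB M J (φM s)))).re
          = -(((starRingEnd ℂ) α * D).im + ((starRingEnd ℂ) α * BB M J (φM s)).im) := by
        rw [show (starRingEnd ℂ) α * (Complex.I * (D + BB M J (φM s)))
            = Complex.I * ((starRingEnd ℂ) α * D + (starRingEnd ℂ) α * BB M J (φM s)) from by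
            ring]
        simp [Complex.mul_re, Complex.add_im]
      rw [this, hB, add_zero]
    rw [hD1]
    rw [show (starRingEnd ℂ) (alphaM M (φM s)) = (starRingEnd ℂ) α from rfl]
    rw [hRe]
    ring
  exact const_of_hasDerivAt_zero hderiv t

end Aux7
section Aux8

open Finset Filter

variable {J μ U M : ℝ}

lemma tsum_eq_of_partial {f g : ℕ → ℝ} (hf : Summable f) (hg : Summable g) {K0 : ℕ}
    (h : ∀ K, K0 ≤ K → ∑ n ∈ Finset.range K, f n = ∑ n ∈ Finset.range K, g n) :
    ∑' n, f n = ∑' n, g n := by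
  have h1 := hf.hasSum.tendsto_sum_nat
  have h2 := hg.hasSum.tendsto_sum_nat
  exact tendsto_nhds_unique h1
    (h2.congr' (eventually_atTop.mpr ⟨K0, fun K hK => (h K hK).symm⟩))

lemma ZS_one (φ : Seq) : ZS M (fun _ => (1:ℝ)) φ = alphaM M φ := by
  rw [show ZS M (fun _ => (1:ℝ)) φ = YS M (fun _ => (1:ℝ)) φ from rfl, YS_one]

lemma sInner_hTrunc_eq {φ : Seq} (hφ : MemDomN 2 φ) (hn : sNormSq φ = 1) (J μ U : ℝ) :
    sInner φ (hTrunc J μ U M φ φ)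
      = (((∑' n, realA J μ U n * ‖φ n‖^2) - J * ‖alphaM M φ‖^2 : ℝ) : ℂ) := by
  set α := alphaM M φ with hα
  have hterm : ∀ n, (starRingEnd ℂ) (φ n) * hTrunc J μ U M φ φ n
      = ((realA J μ U n * ‖φ n‖^2 : ℝ):ℂ)
        + (((-(J:ℂ)) * α) * ((starRingEnd ℂ) (φ n) * opAdM M φ n)
          + ((-(J:ℂ)) * (starRingEnd ℂ) α) * ((starRingEnd ℂ) (φ n) * opAM M φ n)
          + ((J:ℂ) * (((‖α‖:ℝ):ℂ))^2) * ((starRingEnd ℂ) (φ n) * φ n)) := by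
    intro n
    rw [show hTrunc J μ U M φ φ n = ((realA J μ U n : ℝ):ℂ) * φ n
      + (-(J:ℂ)) * (α * opAdM M φ n + (starRingEnd ℂ) α * opAM M φ n
        - (((‖α‖:ℝ):ℂ))^2 * φ n) from by rw [← Acoef_eq]; rfl]
    have h1 : ((‖φ n‖:ℝ):ℂ)^2 = (starRingEnd ℂ) (φ n) * φ n := by
      rw [conj_mul_self]; push_cast; ring
    push_cast
    rw [h1]
    ring
  rw [sInner, tsum_congr hterm]
  have hs1 : Summable fun n => ((realA J μ U n * ‖φ n‖^2 : ℝ):ℂ) :=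
    Complex.summable_ofReal.mpr (summable_realA hφ)
  have hg1 : Summable fun n => (starRingEnd ℂ) (φ n) * opAdM M φ n :=
    summable_of_ne_finset_zero (s := range (KM M)) (fun n hn' => by
      rw [opAdM_eq_zero (by simpa using hn'), mul_zero])
  have hg2 : Summable fun n => (starRingEnd ℂ) (φ n) * opAM M φ n :=
    summable_of_ne_finset_zero (s := range (KM M)) (fun n hn' => by
      rw [opAM_eq_zero (by simpa using hn'), mul_zero])
  have hg3 : Summable fun n => (starRingEnd ℂ) (φ n) * φ n :=
    (Complex.summable_ofReal.mpr hφ.1).congr (fun n => (conj_mul_self (φ n)).symm)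
  rw [Summable.tsum_add hs1 (((hg1.mul_left _).add (hg2.mul_left _)).add (hg3.mul_left _)),
      Summable.tsum_add ((hg1.mul_left _).add (hg2.mul_left _)) (hg3.mul_left _),
      Summable.tsum_add (hg1.mul_left _) (hg2.mul_left _),
      tsum_mul_left, tsum_mul_left, tsum_mul_left]
  have e1 : ∑' n, (starRingEnd ℂ) (φ n) * opAdM M φ n = (starRingEnd ℂ) α := by
    rw [tsum_eq_sum (s := range (KM M)) (fun n hn' => by
      rw [opAdM_eq_zero (by simpa using hn'), mul_zero])]
    have h := sum_opAdM_eq (M := M) (le_refl (KM M)) (fun _ => (1:ℝ)) φ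
    simp only [Complex.ofReal_one, one_mul] at h
    rw [h, ZS_one]
  have e2 : ∑' n, (starRingEnd ℂ) (φ n) * opAM M φ n = α := by
    rw [tsum_eq_sum (s := range (KM M)) (fun n hn' => by
      rw [opAM_eq_zero (by simpa using hn'), mul_zero])]
    have h := sum_opAM_eq (M := M) (le_refl (KM M)) (fun _ => (1:ℝ)) φ
    simp only [Complex.ofReal_one, one_mul] at h
    rw [h, YS_one]
  have e3 : ∑' n, (starRingEnd ℂ) (φ n) * φ n = 1 := by
    have h : ∑' n, (starRingEnd ℂ) (φ n) * φ n = ((sNormSq φ : ℝ):ℂ) := by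
      rw [sNormSq, Complex.ofReal_tsum]
      exact tsum_congr fun n => (conj_mul_self (φ n))
    rw [h, hn, Complex.ofReal_one]
  rw [← Complex.ofReal_tsum, e1, e2, e3]
  have hca : (starRingEnd ℂ) α * α = (((‖α‖:ℝ):ℂ))^2 := by
    rw [conj_mul_self]; push_cast; ring
  push_cast
  linear_combination (-2 * (J:ℂ)) * hca

lemma alphaM_sq_le {φ : Seq} (hφ : MemDomN 2 φ) (hn : sNormSq φ = 1) :
    ‖alphaM M φ‖^2 ≤ ∑' n : ℕ, (n:ℝ) * ‖φ n‖^2 := by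
  classical
  set K := KM M with hK
  set f : ℕ → ℝ := fun n => if (n:ℝ)+1 ≤ M then ‖φ n‖ else 0 with hf
  set g : ℕ → ℝ := fun n => if (n:ℝ)+1 ≤ M then Real.sqrt ((n:ℝ)+1) * ‖φ (n+1)‖ else 0
    with hg
  have hb : ‖alphaM M φ‖ ≤ ∑ n ∈ range K, f n * g n := by
    rw [alphaM_eq_sum]
    refine (norm_sum_le _ _).trans (Finset.sum_le_sum fun n _ => le_of_eq ?_)
    simp only [hf, hg]
    split_ifs with h
    · rw [norm_mul, norm_mul, Complex.norm_real, Real.norm_eq_abs,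
        _root_.abs_of_nonneg (Real.sqrt_nonneg _), RCLike.norm_conj]
      ring
    · simp
  have hCS := sum_mul_sq_le_sq_mul_sq (range K) f g
  have hf2 : ∑ n ∈ range K, f n ^ 2 ≤ 1 := by
    rw [← hn, sNormSq]
    refine le_trans (Finset.sum_le_sum fun n _ => ?_)
      (Summable.sum_le_tsum (range K) (fun n _ => by positivity) hφ.1)
    simp only [hf]
    split_ifs with h
    · exact le_refl _
    · rw [zero_pow (by norm_num : (2:ℕ) ≠ 0)]
      positivity
  have hg2 : ∑ n ∈ range K, g n ^ 2 ≤ ∑' m : ℕ, (m:ℝ) * ‖φ m‖^2 := by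
    have hstep : ∀ n ∈ range K, g n ^ 2 ≤ ((n+1 : ℕ):ℝ) * ‖φ (n+1)‖^2 := by
      intro n _
      simp only [hg]
      split_ifs with h
      · rw [mul_pow, Real.sq_sqrt (by positivity)]
        exact le_of_eq (by push_cast; ring)
      · rw [zero_pow (by norm_num : (2:ℕ) ≠ 0)]
        positivity
    refine le_trans (Finset.sum_le_sum hstep) ?_
    have himg := Finset.sum_image (s := range K) (f := fun m : ℕ => (m:ℝ) * ‖φ m‖^2)
      (g := fun n => n + 1) (fun x _ y _ h => by simpa using h)
    rw [show (∑ n ∈ range K, ((n+1 : ℕ):ℝ) * ‖φ (n+1)‖^2)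
        = ∑ m ∈ Finset.image (fun n : ℕ => n + 1) (range K), ((m:ℕ):ℝ) * ‖φ m‖^2
      from himg.symm]
    exact Summable.sum_le_tsum _ (fun m _ => by positivity) (summable_n1 hφ)
  calc ‖alphaM M φ‖^2 ≤ (∑ n ∈ range K, f n * g n)^2 :=
        pow_le_pow_left₀ (norm_nonneg _) hb 2
    _ ≤ (∑ n ∈ range K, f n^2) * (∑ n ∈ range K, g n^2) := hCS
    _ ≤ 1 * (∑' m : ℕ, (m:ℝ)*‖φ m‖^2) := by
        refine mul_le_mul hf2 hg2 (Finset.sum_nonneg fun n _ => by positivity) (by norm_num)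
    _ = _ := one_mul _

end Aux8
/-- Conservation laws for the truncated mean-field dynamics:
(i) norm conservation, (ii) particle number conservation, (iii) energy conservation for
`h_M^{α_M} = A - J(α_M a*_M + conj α_M a_M - |α_M|²)`, (iv) `|α_M(t)| ≤ ‖𝒩^{1/2}φ₀‖`. -/
theorem truncated_conservation_laws
    (J μ U M : ℝ) (hM : 0 < M) (φM : ℝ → Seq)
    (hsol : IsTruncSolution J μ U M φM) (hnorm : sNormSq (φM 0) = 1) :
    ∀ t : ℝ,
      sNormSq (φM t) = 1 ∧
      Nmom 1 (φM t) = Nmom 1 (φM 0) ∧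
      sInner (φM t) (hTrunc J μ U M (φM t) (φM t)) =
        sInner (φM 0) (hTrunc J μ U M (φM 0) (φM 0)) ∧
      ‖alphaM M (φM t)‖ ≤ Real.sqrt (Nmom 1 (φM 0)) := by
  intro t
  have hnormt : sNormSq (φM t) = sNormSq (φM 0) :=
    tsum_eq_of_partial (hsol.1 t).1 (hsol.1 0).1
      (fun K hK => partial_norm_const hsol hK t)
  have h1 : sNormSq (φM t) = 1 := hnormt.trans hnorm
  have hmom : ∀ s : ℝ, Nmom 1 (φM s) = ∑' n : ℕ, (n:ℝ) * ‖φM s n‖^2 := by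
    intro s
    unfold Nmom
    exact tsum_congr fun n => by rw [Real.rpow_one]
  have hN : Nmom 1 (φM t) = Nmom 1 (φM 0) := by
    rw [hmom t, hmom 0]
    exact tsum_eq_of_partial (summable_n1 (hsol.1 t)) (summable_n1 (hsol.1 0))
      (fun K hK => partial_num_const hsol hK t)
  refine ⟨h1, hN, ?_, ?_⟩
  · rw [sInner_hTrunc_eq (hsol.1 t) h1 J μ U, sInner_hTrunc_eq (hsol.1 0) hnorm J μ U]
    congr 1
    have hEt := Filter.Tendsto.sub_const
      ((summable_realA (J:=J) (μ:=μ) (U:=U) (hsol.1 t)).hasSum.tendsto_sum_nat)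
      (J * ‖alphaM M (φM t)‖^2)
    have hE0 := Filter.Tendsto.sub_const
      ((summable_realA (J:=J) (μ:=μ) (U:=U) (hsol.1 0)).hasSum.tendsto_sum_nat)
      (J * ‖alphaM M (φM 0)‖^2)
    exact tendsto_nhds_unique hEt (hE0.congr' (Filter.eventually_atTop.mpr
      ⟨KM M, fun K hK => (partial_energy_const hsol hK t).symm⟩))
  · have h2 := alphaM_sq_le (M:=M) (hsol.1 t) h1
    rw [← hmom t, hN] at h2
    have h3 := Real.sqrt_le_sqrt h2
    rwa [Real.sqrt_sq (norm_nonneg _)] at h3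

end

end BoseHubbard
end

section
/- Let k ∈ ℕ, let γ and p be trace-class operators on ℓ²(ℂ) with 0 ≤ γ ≤ 1, p a rank-one orthogonal projection, and assume p𝒩^k and γ𝒩^k are trace class. Set q := 1 − p. Then Tr(γ q 𝒩^k q) ≤ 2 Tr(γ 𝒩^k) + 2 Tr(p 𝒩^k). -/
namespace BoseHubbard

noncomputable section

open scoped BigOperators ComplexConjugate
open Complex Filter

section Statement13Proof

set_option maxHeartbeats 1600000

private lemma quadform_nonneg_finset (κ : ℕ → ℕ → ℂ)
    (hpos : ∀ v : ℕ →₀ ℂ, 0 ≤ (∑ m ∈ v.support, ∑ n ∈ v.support, conj (v m) * κ m n * v n).re)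
    (w : ℕ → ℂ) (F : Finset ℕ) :
    0 ≤ (∑ m ∈ F, ∑ n ∈ F, conj (w m) * κ m n * w n).re := by
  classical
  set v : ℕ →₀ ℂ := Finsupp.onFinset F (fun i => if i ∈ F then w i else 0)
    (fun i h => by by_contra hi; simp [hi] at h) with hv
  have hsupp : v.support ⊆ F := Finsupp.support_onFinset_subset
  have hval : ∀ i ∈ F, v i = w i := fun i hi => by simp [hv, hi]
  have hzero : ∀ i, i ∉ v.support → v i = 0 := fun i hi => Finsupp.notMem_support_iff.mp hi
  have key : (∑ m ∈ v.support, ∑ n ∈ v.support, conj (v m) * κ m n * v n)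
      = ∑ m ∈ F, ∑ n ∈ F, conj (w m) * κ m n * w n := by
    rw [Finset.sum_subset hsupp (fun m _ hm => by
      simp [hzero m hm])]
    refine Finset.sum_congr rfl fun m hm => ?_
    rw [Finset.sum_subset hsupp (fun n _ hn => by simp [hzero n hn])]
    exact Finset.sum_congr rfl fun n hn => by rw [hval m hm, hval n hn]
  have := hpos v
  rwa [key] at this

private lemma tendsto_square :
    Tendsto (fun N => Finset.range N ×ˢ Finset.range N) atTop atTop := by
  apply tendsto_atTop_finset_of_monotone
  · intro a b hab
    exact Finset.product_subset_product (Finset.range_subset_range.2 hab) (Finset.range_subset_range.2 hab)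
  · rintro ⟨a, b⟩
    exact ⟨max a b + 1, by simp [Finset.mem_product, Nat.lt_succ]⟩

private lemma quadform_nonneg_tsum (κ : ℕ → ℕ → ℂ)
    (hpos : ∀ v : ℕ →₀ ℂ, 0 ≤ (∑ m ∈ v.support, ∑ n ∈ v.support, conj (v m) * κ m n * v n).re)
    (w : ℕ → ℂ) (hsum : Summable fun p : ℕ × ℕ => conj (w p.1) * κ p.1 p.2 * w p.2) :
    0 ≤ (∑' p : ℕ × ℕ, conj (w p.1) * κ p.1 p.2 * w p.2).re := by
  have h1 : Tendsto (fun N => ∑ p ∈ Finset.range N ×ˢ Finset.range N,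
      conj (w p.1) * κ p.1 p.2 * w p.2) atTop
      (nhds (∑' p : ℕ × ℕ, conj (w p.1) * κ p.1 p.2 * w p.2)) :=
    hsum.hasSum.comp tendsto_square
  have h2 := (Complex.continuous_re.tendsto _).comp h1
  refine ge_of_tendsto h2 (Filter.Eventually.of_forall fun N => ?_)
  have := quadform_nonneg_finset κ hpos w (Finset.range N)
  simpa [Function.comp, Finset.sum_product] using this

private lemma diag_re_nonneg (κ : ℕ → ℕ → ℂ)
    (hpos : ∀ v : ℕ →₀ ℂ, 0 ≤ (∑ m ∈ v.support, ∑ n ∈ v.support, conj (v m) * κ m n * v n).re)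
    (m : ℕ) : 0 ≤ (κ m m).re := by
  have := quadform_nonneg_finset κ hpos (fun _ => 1) {m}
  simpa using this

private lemma entry_bound (κ : ℕ → ℕ → ℂ)
    (hherm : ∀ m n, κ n m = conj (κ m n))
    (hpos : ∀ v : ℕ →₀ ℂ, 0 ≤ (∑ m ∈ v.support, ∑ n ∈ v.support, conj (v m) * κ m n * v n).re)
    (m n : ℕ) : ‖κ m n‖ ≤ Real.sqrt (κ m m).re * Real.sqrt (κ n n).re := by
  have hd0m := diag_re_nonneg κ hpos m
  have hd0n := diag_re_nonneg κ hpos n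
  by_cases hmn : m = n
  · subst hmn
    have him : (κ m m).im = 0 := by
      have h := congrArg Complex.im (hherm m m)
      simp at h
      linarith [h]
    have hnorm : ‖κ m m‖ = (κ m m).re := by
      rw [Complex.norm_def, Complex.normSq_apply, him, mul_zero, add_zero]
      exact Real.sqrt_mul_self hd0m
    rw [hnorm, Real.mul_self_sqrt hd0m]
  · by_cases hc : κ m n = 0
    · rw [hc]; simp; positivity
    -- quadratic form on pairs
    have key : ∀ t : ℝ, 0 ≤ (κ n n).re * (t * t) + (2 * ‖κ m n‖ ^ 2) * t
        + (κ m m).re * ‖κ m n‖ ^ 2 := by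
      intro t
      have h := quadform_nonneg_finset κ hpos
        (fun i => if i = m then κ m n else (t : ℂ)) {m, n}
      simp only [Finset.sum_pair hmn, if_pos rfl, if_neg (Ne.symm hmn), if_true,
        eq_self_iff_true] at h
      have e1 : conj (κ m n) * κ m m * κ m n = κ m m * ((‖κ m n‖ : ℂ) ^ 2) := by
        rw [show conj (κ m n) * κ m m * κ m n = κ m m * (κ m n * conj (κ m n)) by ring,
          Complex.mul_conj']
      have e2 : conj (κ m n) * κ m n * (t : ℂ) = ((‖κ m n‖ ^ 2 * t : ℝ) : ℂ) := by
        rw [show conj (κ m n) * κ m n * (t:ℂ) = (κ m n * conj (κ m n)) * t by ring,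
          Complex.mul_conj']
        push_cast
        ring
      have e3 : conj (t : ℂ) * κ n m * κ m n = ((‖κ m n‖ ^ 2 * t : ℝ) : ℂ) := by
        rw [hherm m n, show conj (t:ℂ) * conj (κ m n) * κ m n
            = (κ m n * conj (κ m n)) * conj (t:ℂ) by ring, Complex.mul_conj']
        push_cast [Complex.conj_ofReal]
        ring
      have e4 : conj (t:ℂ) * κ n n * (t:ℂ) = κ n n * ((t*t : ℝ):ℂ) := by
        rw [Complex.conj_ofReal]
        push_cast
        ring
      rw [e1, e2, e3, e4] at h
      simp only [← Complex.ofReal_pow, Complex.add_re, Complex.mul_re, Complex.ofReal_re,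
        Complex.ofReal_im] at h
      nlinarith [h]
    have hd := discrim_le_zero key
    rw [discrim] at hd
    have hsq : ‖κ m n‖ ^ 2 ≤ (κ m m).re * (κ n n).re := by
      have hc' : 0 < ‖κ m n‖ ^ 2 := pow_pos (norm_pos_iff.mpr hc) 2
      nlinarith [hd, hc']
    calc ‖κ m n‖ = Real.sqrt (‖κ m n‖ ^ 2) := by
          rw [Real.sqrt_sq (norm_nonneg _)]
      _ ≤ Real.sqrt ((κ m m).re * (κ n n).re) := Real.sqrt_le_sqrt hsq
      _ = Real.sqrt (κ m m).re * Real.sqrt (κ n n).re := Real.sqrt_mul hd0m _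



/-- For `0 ≤ γ ≤ 1` trace class, `p = |φ⟩⟨φ|` a rank-one projection, and
`q = 1 - p`, one has `Tr(γ q 𝒩^k q) ≤ 2 Tr(γ 𝒩^k) + 2 Tr(p 𝒩^k)`. -/

theorem removing_q_from_moment
    (k : ℕ) (γ : ℕ → ℕ → ℂ) (φ : Seq)
    (hφ2 : MemL2 φ) (hφnorm : sNormSq φ = 1)
    (hγpos : kerPosSemidef γ)
    (hγle1 : kerPosSemidef (fun m n => idKer m n - γ m n))
    (hγtc : Summable fun m => (γ m m).re)
    (hγNk : Summable fun m : ℕ => (γ m m).re * (m : ℝ) ^ k)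
    (hpNk : Summable fun n : ℕ => (n : ℝ) ^ k * ‖φ n‖ ^ 2) :
    (kerTr (kerMul γ (qDiagq (fun n => (n : ℝ) ^ k) φ))).re ≤
      2 * (∑' m : ℕ, (γ m m).re * (m : ℝ) ^ k) +
        2 * ∑' n : ℕ, (n : ℝ) ^ k * ‖φ n‖ ^ 2 := by
  classical
  obtain ⟨hherm, hpos⟩ := hγpos
  obtain ⟨hherm', hpos'⟩ := hγle1
  set S : ℝ := ∑' n : ℕ, (n : ℝ) ^ k * ‖φ n‖ ^ 2 with hSdef
  set T : ℝ := ∑' m : ℕ, (γ m m).re * (m : ℝ) ^ k with hTdef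
  set r : ℕ → ℝ := fun m => Real.sqrt ((γ m m).re) with hrdef
  set Gc : ℕ → ℂ := fun n => (((n : ℝ) ^ k : ℝ) : ℂ) with hGcdef
  have hg0 : ∀ n : ℕ, (0:ℝ) ≤ (n : ℝ) ^ k := fun n => pow_nonneg (Nat.cast_nonneg n) k
  have hd0 : ∀ m, 0 ≤ (γ m m).re := fun m => diag_re_nonneg γ hpos m
  have hr2 : ∀ m, r m ^ 2 = (γ m m).re := fun m => Real.sq_sqrt (hd0 m)
  have hr0 : ∀ m, 0 ≤ r m := fun m => Real.sqrt_nonneg _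
  have hdiag : ∀ m, γ m m = (((γ m m).re : ℝ) : ℂ) := by
    intro m
    have h := congrArg Complex.im (hherm m m)
    rw [Complex.conj_im] at h
    apply Complex.ext
    · simp
    · simp only [Complex.ofReal_im]; linarith
  have hb : ∀ m n, ‖γ m n‖ ≤ r m * r n := fun m n => entry_bound γ hherm hpos m n
  have hdg : Summable (fun m => (γ m m).re * (m:ℝ)^k) := hγNk
  -- elementary summability
  have s1 : Summable (fun m => ‖φ m‖ * r m) := by
    refine Summable.of_nonneg_of_le (fun m => by positivity) (fun m => ?_)
      ((hφ2.add hγtc).div_const 2)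
    have h2 := two_mul_le_add_sq (‖φ m‖) (r m)
    have h3 := hr2 m
    nlinarith
  have s2 : Summable (fun m : ℕ => (m:ℝ)^k * (‖φ m‖ * r m)) := by
    have hsum : Summable (fun m : ℕ => ((m:ℝ)^k * ‖φ m‖ ^ 2 + (m:ℝ)^k * (γ m m).re)/2) := by
      apply Summable.div_const
      exact hpNk.add (by simpa [mul_comm] using hγNk)
    refine Summable.of_nonneg_of_le (fun m => by positivity) (fun m => ?_) hsum
    have h2 := two_mul_le_add_sq (‖φ m‖) (r m)
    have h3 := hr2 m
    have h4 := hg0 m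
    nlinarith [mul_le_mul_of_nonneg_left (by nlinarith : ‖φ m‖ * r m ≤ (‖φ m‖^2 + (γ m m).re)/2) h4]
  set C1 : ℝ := ∑' m : ℕ, ‖φ m‖ * r m with hC1def
  set C2 : ℝ := ∑' m : ℕ, (m:ℝ)^k * (‖φ m‖ * r m) with hC2def
  have hC1_0 : 0 ≤ C1 := tsum_nonneg fun m => by positivity
  have hC2_0 : 0 ≤ C2 := tsum_nonneg fun m => by positivity
  -- row sums
  have hrow_norm : ∀ m, Summable (fun j => ‖γ m j * φ j‖) := by
    intro m
    refine Summable.of_nonneg_of_le (fun j => norm_nonneg _) (fun j => ?_) (s1.mul_left (r m))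
    rw [norm_mul]
    calc ‖γ m j‖ * ‖φ j‖ ≤ (r m * r j) * ‖φ j‖ :=
          mul_le_mul_of_nonneg_right (hb m j) (norm_nonneg _)
      _ = r m * (‖φ j‖ * r j) := by ring
  have hrow : ∀ m, Summable (fun j => γ m j * φ j) := fun m => (hrow_norm m).of_norm
  set γφ : ℕ → ℂ := fun m => ∑' j, γ m j * φ j with hγφdef
  have hγφ_bound : ∀ m, ‖γφ m‖ ≤ r m * C1 := by
    intro m
    calc ‖γφ m‖ ≤ ∑' j, ‖γ m j * φ j‖ := norm_tsum_le_tsum_norm (hrow_norm m)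
      _ ≤ ∑' j, r m * (‖φ j‖ * r j) := by
          refine Summable.tsum_le_tsum (fun j => ?_) (hrow_norm m) (s1.mul_left (r m))
          rw [norm_mul]
          calc ‖γ m j‖ * ‖φ j‖ ≤ (r m * r j) * ‖φ j‖ :=
                mul_le_mul_of_nonneg_right (hb m j) (norm_nonneg _)
            _ = r m * (‖φ j‖ * r j) := by ring
      _ = r m * C1 := by rw [tsum_mul_left]
  have hrowG_norm : ∀ m, Summable (fun j => ‖γ m j * (Gc j * φ j)‖) := by
    intro m
    refine Summable.of_nonneg_of_le (fun j => norm_nonneg _) (fun j => ?_) (s2.mul_left (r m))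
    rw [norm_mul, norm_mul]
    have hGn : ‖Gc j‖ = (j:ℝ)^k := by
      simp [hGcdef, Complex.norm_real, _root_.abs_of_nonneg (hg0 j)]
    rw [hGn]
    calc ‖γ m j‖ * ((j:ℝ)^k * ‖φ j‖) ≤ (r m * r j) * ((j:ℝ)^k * ‖φ j‖) := by
          refine mul_le_mul_of_nonneg_right (hb m j) (by positivity)
      _ = r m * ((j:ℝ)^k * (‖φ j‖ * r j)) := by ring
  have hrowG : ∀ m, Summable (fun j => γ m j * (Gc j * φ j)) := fun m => (hrowG_norm m).of_norm
  set γGφ : ℕ → ℂ := fun m => ∑' j, γ m j * (Gc j * φ j) with hγGφdef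
  have hγGφ_bound : ∀ m, ‖γGφ m‖ ≤ r m * C2 := by
    intro m
    calc ‖γGφ m‖ ≤ ∑' j, ‖γ m j * (Gc j * φ j)‖ := norm_tsum_le_tsum_norm (hrowG_norm m)
      _ ≤ ∑' j : ℕ, r m * ((j:ℝ)^k * (‖φ j‖ * r j)) := by
          refine Summable.tsum_le_tsum (fun j => ?_) (hrowG_norm m) (s2.mul_left (r m))
          rw [norm_mul, norm_mul]
          have hGn : ‖Gc j‖ = (j:ℝ)^k := by
            simp [hGcdef, Complex.norm_real, _root_.abs_of_nonneg (hg0 j)]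
          rw [hGn]
          calc ‖γ m j‖ * ((j:ℝ)^k * ‖φ j‖) ≤ (r m * r j) * ((j:ℝ)^k * ‖φ j‖) :=
                mul_le_mul_of_nonneg_right (hb m j) (by positivity)
            _ = r m * ((j:ℝ)^k * (‖φ j‖ * r j)) := by ring
      _ = r m * C2 := by rw [tsum_mul_left]
  -- product families
  have hF1 : Summable (fun p : ℕ × ℕ => conj (φ p.1) * γ p.1 p.2 * φ p.2) := by
    apply Summable.of_norm
    refine Summable.of_nonneg_of_le (fun p => norm_nonneg _) (fun p => ?_)
      (s1.mul_of_nonneg s1 (fun m => by positivity) (fun m => by positivity))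
    rw [norm_mul, norm_mul, RCLike.norm_conj]
    have := hb p.1 p.2
    nlinarith [norm_nonneg (φ p.1), norm_nonneg (φ p.2), hr0 p.1, hr0 p.2,
      mul_nonneg (norm_nonneg (φ p.1)) (norm_nonneg (φ p.2))]
  have hF2 : Summable (fun p : ℕ × ℕ => conj (φ p.1) * γ p.1 p.2 * (Gc p.2 * φ p.2)) := by
    apply Summable.of_norm
    refine Summable.of_nonneg_of_le (fun p => norm_nonneg _) (fun p => ?_)
      (s1.mul_of_nonneg s2 (fun m => by positivity) (fun m => by positivity))
    rw [norm_mul, norm_mul, norm_mul, RCLike.norm_conj]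
    have hGn : ‖Gc p.2‖ = (p.2:ℝ)^k := by
      simp [hGcdef, Complex.norm_real, _root_.abs_of_nonneg (hg0 p.2)]
    rw [hGn]
    have := hb p.1 p.2
    nlinarith [norm_nonneg (φ p.1), norm_nonneg (φ p.2), hr0 p.1, hr0 p.2, hg0 p.2,
      mul_nonneg (mul_nonneg (norm_nonneg (φ p.1)) (norm_nonneg (φ p.2))) (hg0 p.2)]
  have hF3 : Summable (fun p : ℕ × ℕ => Gc p.1 * (conj (φ p.1) * γ p.1 p.2 * φ p.2)) := by
    apply Summable.of_norm
    refine Summable.of_nonneg_of_le (fun p => norm_nonneg _) (fun p => ?_)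
      (s2.mul_of_nonneg s1 (fun m => by positivity) (fun m => by positivity))
    rw [norm_mul, norm_mul, norm_mul, RCLike.norm_conj]
    have hGn : ‖Gc p.1‖ = (p.1:ℝ)^k := by
      simp [hGcdef, Complex.norm_real, _root_.abs_of_nonneg (hg0 p.1)]
    rw [hGn]
    have := hb p.1 p.2
    nlinarith [norm_nonneg (φ p.1), norm_nonneg (φ p.2), hr0 p.1, hr0 p.2, hg0 p.1,
      mul_nonneg (mul_nonneg (norm_nonneg (φ p.1)) (norm_nonneg (φ p.2))) (hg0 p.1)]
  set X : ℂ := ∑' p : ℕ × ℕ, conj (φ p.1) * γ p.1 p.2 * φ p.2 with hXdef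
  set Y : ℂ := ∑' p : ℕ × ℕ, conj (φ p.1) * γ p.1 p.2 * (Gc p.2 * φ p.2) with hYdef
  set Z : ℂ := ∑' p : ℕ × ℕ, Gc p.1 * (conj (φ p.1) * γ p.1 p.2 * φ p.2) with hZdef
  -- Z.re = Y.re
  have hGconj : ∀ n, conj (Gc n) = Gc n := fun n => by rw [hGcdef]; exact Complex.conj_ofReal _
  have hYZ : Z.re = Y.re := by
    have hre3 : Z.re = ∑' p : ℕ × ℕ, (Gc p.1 * (conj (φ p.1) * γ p.1 p.2 * φ p.2)).re := by
      rw [hZdef]; exact Complex.re_tsum hF3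
    have hre2 : Y.re = ∑' p : ℕ × ℕ, (conj (φ p.1) * γ p.1 p.2 * (Gc p.2 * φ p.2)).re := by
      rw [hYdef]; exact Complex.re_tsum hF2
    rw [hre3, hre2,
      ← (Equiv.prodComm ℕ ℕ).tsum_eq
        (fun p : ℕ × ℕ => (conj (φ p.1) * γ p.1 p.2 * (Gc p.2 * φ p.2)).re)]
    refine tsum_congr fun p => ?_
    have h1 : conj (Gc p.1 * (conj (φ p.1) * γ p.1 p.2 * φ p.2))
        = conj (φ p.2) * γ p.2 p.1 * (Gc p.1 * φ p.1) := by
      rw [map_mul, map_mul, map_mul, Complex.conj_conj, ← hherm p.1 p.2, hGconj]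
      ring
    have h2 : ((Equiv.prodComm ℕ ℕ) p) = p.swap := rfl
    rw [h2]
    simp only [Prod.fst_swap, Prod.snd_swap]
    rw [← h1, Complex.conj_re]
  -- X.re ≤ 1
  have hXle1 : X.re ≤ 1 := by
    have hinj : Function.Injective (fun n : ℕ => ((n, n) : ℕ × ℕ)) := by
      intro a b h; simpa using congrArg Prod.fst h
    have hz : ∀ p : ℕ × ℕ, p ∉ Set.range (fun n : ℕ => ((n, n) : ℕ × ℕ)) →
        conj (φ p.1) * idKer p.1 p.2 * φ p.2 = 0 := by
      intro p hp
      have hne : p.1 ≠ p.2 := by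
        intro h
        exact hp ⟨p.1, by simp [Prod.ext_iff, h]⟩
      simp [idKer, hne]
    have hcomp : Summable ((fun p : ℕ × ℕ => conj (φ p.1) * idKer p.1 p.2 * φ p.2)
        ∘ (fun n : ℕ => ((n, n) : ℕ × ℕ))) := by
      refine Summable.congr (Complex.summable_ofReal.mpr hφ2) (fun n => ?_)
      simp only [Function.comp, idKer, if_pos rfl, if_true, mul_one, Complex.conj_mul',
        Complex.ofReal_pow]
    have hD : Summable (fun p : ℕ × ℕ => conj (φ p.1) * idKer p.1 p.2 * φ p.2) :=
      (hinj.summable_iff hz).mp hcomp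
    have hDval : (∑' p : ℕ × ℕ, conj (φ p.1) * idKer p.1 p.2 * φ p.2) = 1 := by
      rw [← hinj.tsum_eq (by
        intro p hp
        by_contra hcon
        exact hp (hz p hcon))]
      have : (∑' n : ℕ, conj (φ ((n,n) : ℕ × ℕ).1) * idKer ((n,n) : ℕ × ℕ).1 ((n,n) : ℕ × ℕ).2
          * φ ((n,n) : ℕ × ℕ).2) = ∑' n : ℕ, ((‖φ n‖ ^ 2 : ℝ) : ℂ) := by
        refine tsum_congr fun n => ?_
        simp only [idKer, if_pos rfl, if_true, mul_one, Complex.conj_mul', Complex.ofReal_pow]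
      rw [this, ← Complex.ofReal_tsum]
      have hnormφ : (∑' n : ℕ, ‖φ n‖ ^ 2) = 1 := hφnorm
      rw [hnormφ, Complex.ofReal_one]
    have hfam : (fun p : ℕ × ℕ => conj (φ p.1) * ((fun m n => idKer m n - γ m n) p.1 p.2) * φ p.2)
        = fun p : ℕ × ℕ => conj (φ p.1) * idKer p.1 p.2 * φ p.2
          - conj (φ p.1) * γ p.1 p.2 * φ p.2 := by
      funext p; simp only []; ring
    have hq := quadform_nonneg_tsum (fun m n => idKer m n - γ m n) hpos' φ
      (by rw [hfam]; exact hD.sub hF1)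
    rw [hfam, Summable.tsum_sub hD hF1, hDval, ← hXdef] at hq
    simp only [Complex.sub_re, Complex.one_re] at hq
    linarith
  -- positivity of (1+p) N^k (1+p)
  have hγφapp : ∀ m, γφ m = ∑' j : ℕ, γ m j * φ j := fun m => rfl
  have hγGφapp : ∀ m, γGφ m = ∑' j : ℕ, γ m j * (Gc j * φ j) := fun m => rfl
  have hGcapp : ∀ n : ℕ, Gc n = (((n:ℝ)^k : ℝ) : ℂ) := fun n => rfl
  have hconjγφ : ∀ j : ℕ, conj (γφ j) = ∑' n : ℕ, conj (φ n) * γ n j := by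
    intro j
    calc conj (γφ j) = star (∑' n : ℕ, γ j n * φ n) := by rw [hγφapp]; rfl
      _ = ∑' n : ℕ, star (γ j n * φ n) := tsum_star
      _ = ∑' n : ℕ, conj (φ n) * γ n j := by
          refine tsum_congr fun n => ?_
          rw [star_mul']
          rw [show star (γ j n) = conj (γ j n) from rfl, ← hherm j n]
          exact mul_comm _ _
  have hQf : ∀ j : ℕ, 0 ≤ (γ j j).re + 2 * (conj (φ j) * γφ j).re + ‖φ j‖ ^ 2 * X.re := by
    intro j
    set w : ℕ → ℂ := fun m => (if m = j then 1 else 0) + conj (φ j) * φ m with hwdef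
    set A1 : ℕ × ℕ → ℂ := fun p => if p = (j, j) then γ j j else 0 with hA1def
    set A2 : ℕ × ℕ → ℂ := fun p => if p.1 = j then γ j p.2 * (conj (φ j) * φ p.2) else 0
      with hA2def
    set A3 : ℕ × ℕ → ℂ := fun p => if p.2 = j then (φ j * conj (φ p.1)) * γ p.1 j else 0
      with hA3def
    set A4 : ℕ × ℕ → ℂ := fun p => (φ j * conj (φ j)) * (conj (φ p.1) * γ p.1 p.2 * φ p.2)
      with hA4def
    have hfamA : (fun p : ℕ × ℕ => conj (w p.1) * γ p.1 p.2 * w p.2)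
        = fun p => A1 p + A2 p + A3 p + A4 p := by
      funext p
      obtain ⟨a, b⟩ := p
      by_cases h1 : a = j <;> by_cases h2 : b = j <;>
        simp only [hwdef, hA1def, hA2def, hA3def, hA4def, h1, h2, if_pos, if_neg,
          Prod.mk.injEq, if_true, if_false, and_true, true_and, and_false, false_and,
          map_add, map_mul, Complex.conj_conj, apply_ite (starRingEnd ℂ), map_one, map_zero,
          eq_self_iff_true, not_true, not_false_iff] <;>
        ring
    have hA1 : Summable A1 := by
      rw [hA1def]; exact (hasSum_ite_eq ((j, j) : ℕ × ℕ) (γ j j)).summable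
    have hA1val : ∑' p : ℕ × ℕ, A1 p = γ j j := by
      rw [hA1def]; exact (hasSum_ite_eq ((j, j) : ℕ × ℕ) (γ j j)).tsum_eq
    have hinj2 : Function.Injective (fun n : ℕ => ((j, n) : ℕ × ℕ)) := by
      intro a b h; simpa using congrArg Prod.snd h
    have hz2 : ∀ p : ℕ × ℕ, p ∉ Set.range (fun n : ℕ => ((j, n) : ℕ × ℕ)) → A2 p = 0 := by
      intro p hp
      have : p.1 ≠ j := by
        intro h
        exact hp ⟨p.2, by simp [Prod.ext_iff, h.symm]⟩
      simp [hA2def, this]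
    have hcomp2 : Summable (A2 ∘ (fun n : ℕ => ((j, n) : ℕ × ℕ))) := by
      refine Summable.congr ((hrow j).mul_left (conj (φ j))) (fun n => ?_)
      simp [hA2def, Function.comp]
      ring
    have hA2 : Summable A2 := (hinj2.summable_iff hz2).mp hcomp2
    have hA2val : ∑' p : ℕ × ℕ, A2 p = conj (φ j) * γφ j := by
      rw [← hinj2.tsum_eq (by
        intro p hp
        by_contra hcon
        exact hp (hz2 p hcon))]
      have : (∑' n : ℕ, A2 ((j, n) : ℕ × ℕ))
          = ∑' n : ℕ, conj (φ j) * (γ j n * φ n) := by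
        refine tsum_congr fun n => ?_
        simp [hA2def]
        ring
      rw [this, tsum_mul_left, hγφapp]
    have hinj3 : Function.Injective (fun n : ℕ => ((n, j) : ℕ × ℕ)) := by
      intro a b h; simpa using congrArg Prod.fst h
    have hz3 : ∀ p : ℕ × ℕ, p ∉ Set.range (fun n : ℕ => ((n, j) : ℕ × ℕ)) → A3 p = 0 := by
      intro p hp
      have : p.2 ≠ j := by
        intro h
        exact hp ⟨p.1, by simp [Prod.ext_iff, h.symm]⟩
      simp [hA3def, this]
    have hcomp3 : Summable (A3 ∘ (fun n : ℕ => ((n, j) : ℕ × ℕ))) := by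
      apply Summable.of_norm
      refine Summable.of_nonneg_of_le (fun n => norm_nonneg _) (fun n => ?_)
        ((s1.mul_left (‖φ j‖ * r j)))
      simp only [hA3def, Function.comp, if_pos rfl, if_true]
      rw [norm_mul, norm_mul, RCLike.norm_conj]
      have := hb n j
      nlinarith [norm_nonneg (φ j), norm_nonneg (φ n), hr0 n, hr0 j,
        mul_nonneg (norm_nonneg (φ j)) (norm_nonneg (φ n))]
    have hA3 : Summable A3 := (hinj3.summable_iff hz3).mp hcomp3
    have hA3val : ∑' p : ℕ × ℕ, A3 p = φ j * conj (γφ j) := by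
      rw [← hinj3.tsum_eq (by
        intro p hp
        by_contra hcon
        exact hp (hz3 p hcon))]
      have : (∑' n : ℕ, A3 ((n, j) : ℕ × ℕ))
          = ∑' n : ℕ, φ j * (conj (φ n) * γ n j) := by
        refine tsum_congr fun n => ?_
        simp [hA3def]
        ring
      rw [this, tsum_mul_left, hconjγφ j]
    have hA4 : Summable A4 := by
      rw [hA4def]; exact hF1.mul_left _
    have hA4val : ∑' p : ℕ × ℕ, A4 p = (φ j * conj (φ j)) * X := by
      rw [hA4def, tsum_mul_left, hXdef]
    have hfamsum : Summable (fun p : ℕ × ℕ => conj (w p.1) * γ p.1 p.2 * w p.2) := by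
      rw [hfamA]; exact ((hA1.add hA2).add hA3).add hA4
    have hq := quadform_nonneg_tsum γ hpos w hfamsum
    rw [hfamA, Summable.tsum_add ((hA1.add hA2).add hA3) hA4, Summable.tsum_add (hA1.add hA2) hA3,
      Summable.tsum_add hA1 hA2, hA1val, hA2val, hA3val, hA4val] at hq
    have hre : (γ j j + conj (φ j) * γφ j + φ j * conj (γφ j) + φ j * conj (φ j) * X).re
        = (γ j j).re + 2 * (conj (φ j) * γφ j).re + ‖φ j‖ ^ 2 * X.re := by
      have e1 : (φ j * conj (γφ j)).re = (conj (φ j) * γφ j).re := by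
        rw [show φ j * conj (γφ j) = conj (conj (φ j) * γφ j) by
          rw [map_mul, Complex.conj_conj], Complex.conj_re]
      have e2 : φ j * conj (φ j) * X = ((‖φ j‖ ^ 2 : ℝ) : ℂ) * X := by
        rw [Complex.mul_conj']
        push_cast
        ring
      rw [e2]
      simp only [Complex.add_re, Complex.re_ofReal_mul, e1]
      ring
    rw [hre] at hq
    exact hq
  have hP : 0 ≤ T + 2 * Y.re + S * X.re := by
    have hsum2 : Summable (fun j : ℕ => 2 * ((j:ℝ)^k * (conj (φ j) * γφ j).re)) := by
      apply Summable.mul_left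
      refine Summable.of_norm_bounded (s2.mul_right C1) (fun j => ?_)
      rw [Real.norm_eq_abs, abs_mul, _root_.abs_of_nonneg (hg0 j)]
      have h1 : |(conj (φ j) * γφ j).re| ≤ ‖conj (φ j) * γφ j‖ := Complex.abs_re_le_norm _
      have h2 : ‖conj (φ j) * γφ j‖ ≤ ‖φ j‖ * (r j * C1) := by
        rw [norm_mul, RCLike.norm_conj]
        exact mul_le_mul_of_nonneg_left (hγφ_bound j) (norm_nonneg _)
      have h4 := hg0 j
      nlinarith [abs_nonneg ((conj (φ j) * γφ j).re)]
    have hsum1 : Summable (fun j : ℕ => (j:ℝ)^k * (γ j j).re) := by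
      refine hγNk.congr fun j => ?_
      ring
    have hsum3 : Summable (fun j : ℕ => ((j:ℝ)^k * ‖φ j‖^2) * X.re) := hpNk.mul_right _
    have hnn : 0 ≤ ∑' j : ℕ, (j:ℝ)^k *
        ((γ j j).re + 2 * (conj (φ j) * γφ j).re + ‖φ j‖ ^ 2 * X.re) :=
      tsum_nonneg fun j => mul_nonneg (hg0 j) (hQf j)
    have hsplit : (∑' j : ℕ, (j:ℝ)^k *
        ((γ j j).re + 2 * (conj (φ j) * γφ j).re + ‖φ j‖ ^ 2 * X.re))
        = (∑' j : ℕ, (j:ℝ)^k * (γ j j).re)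
          + (∑' j : ℕ, 2 * ((j:ℝ)^k * (conj (φ j) * γφ j).re))
          + (∑' j : ℕ, ((j:ℝ)^k * ‖φ j‖^2) * X.re) := by
      rw [← Summable.tsum_add hsum1 hsum2, ← Summable.tsum_add (hsum1.add hsum2) hsum3]
      refine tsum_congr fun j => ?_
      ring
    have hZre : (∑' j : ℕ, (j:ℝ)^k * (conj (φ j) * γφ j).re) = Z.re := by
      have hfib : ∀ m : ℕ, Summable (fun l : ℕ => Gc m * (conj (φ m) * γ m l * φ l)) := by
        intro m
        refine Summable.congr ((hrow m).mul_left (Gc m * conj (φ m))) (fun l => ?_)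
        ring
      have h1 : Z.re = ∑' p : ℕ × ℕ, (Gc p.1 * (conj (φ p.1) * γ p.1 p.2 * φ p.2)).re := by
        rw [hZdef]; exact Complex.re_tsum hF3
      have h2 : Summable (fun p : ℕ × ℕ => (Gc p.1 * (conj (φ p.1) * γ p.1 p.2 * φ p.2)).re) := by
        have := Complex.hasSum_re hF3.hasSum
        exact this.summable
      rw [h1, Summable.tsum_prod' h2 (fun m => ?_)]
      swap
      · have := Complex.hasSum_re (hfib m).hasSum
        exact this.summable
      refine tsum_congr fun m => ?_
      have h3 : (∑' l : ℕ, (Gc m * (conj (φ m) * γ m l * φ l)).re)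
          = (∑' l : ℕ, Gc m * (conj (φ m) * γ m l * φ l)).re :=
        (Complex.re_tsum (hfib m)).symm
      rw [h3]
      have h4 : (∑' l : ℕ, Gc m * (conj (φ m) * γ m l * φ l))
          = Gc m * (conj (φ m) * γφ m) := by
        have h5 : (∑' l : ℕ, Gc m * (conj (φ m) * γ m l * φ l))
            = ∑' l : ℕ, (Gc m * conj (φ m)) * (γ m l * φ l) := by
          refine tsum_congr fun l => ?_
          ring
        rw [h5, tsum_mul_left, hγφapp]
        ring
      rw [h4, hGcapp, Complex.re_ofReal_mul]
    have hT2 : (∑' j : ℕ, (j:ℝ)^k * (γ j j).re) = T := by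
      rw [hTdef]
      refine tsum_congr fun j => ?_
      ring
    have hS2 : (∑' j : ℕ, ((j:ℝ)^k * ‖φ j‖^2) * X.re) = S * X.re := by
      rw [hSdef, ← tsum_mul_right]
    rw [hsplit, hT2, tsum_mul_left, hZre, hYZ, hS2] at hnn
    linarith
  -- trace identity
  have hSc : (∑' j : ℕ, ((((j:ℝ)^k) : ℝ) : ℂ) * ((‖φ j‖ : ℂ))^2) = ((S : ℝ) : ℂ) := by
    rw [hSdef, Complex.ofReal_tsum]
    refine tsum_congr fun j => ?_
    push_cast
    ring
  have hE1 : ∀ m : ℕ, (∑' l : ℕ, γ m l * qDiagq (fun n => (n:ℝ)^k) φ l m)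
      = γ m m * Gc m + (((S:ℝ):ℂ) * (conj (φ m) * γφ m) - conj (φ m) * γGφ m
        - Gc m * (conj (φ m) * γφ m)) := by
    intro m
    have hsplitf : (fun l : ℕ => γ m l * qDiagq (fun n => (n:ℝ)^k) φ l m)
        = fun l : ℕ => (if l = m then γ m m * Gc m else 0)
          + ((((S:ℝ):ℂ) * conj (φ m)) * (γ m l * φ l)
            - conj (φ m) * (γ m l * (Gc l * φ l))
            - (Gc m * conj (φ m)) * (γ m l * φ l)) := by
      funext l
      simp only [qDiagq]
      rw [hSc]
      by_cases hl : l = m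
      · subst hl
        simp only [if_pos rfl, if_true, hGcapp]
        ring
      · simp only [if_neg hl, hGcapp]
        ring
    rw [hsplitf]
    have t0 : Summable (fun l : ℕ => if l = m then γ m m * Gc m else 0) :=
      (hasSum_ite_eq m (γ m m * Gc m)).summable
    have ta : Summable (fun l : ℕ => (((S:ℝ):ℂ) * conj (φ m)) * (γ m l * φ l)) :=
      (hrow m).mul_left _
    have tb : Summable (fun l : ℕ => conj (φ m) * (γ m l * (Gc l * φ l))) :=
      (hrowG m).mul_left _
    have tc : Summable (fun l : ℕ => (Gc m * conj (φ m)) * (γ m l * φ l)) :=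
      (hrow m).mul_left _
    rw [Summable.tsum_add t0 ((ta.sub tb).sub tc), Summable.tsum_sub (ta.sub tb) tc, Summable.tsum_sub ta tb,
      tsum_mul_left, tsum_mul_left, tsum_mul_left, (hasSum_ite_eq m (γ m m * Gc m)).tsum_eq,
      ← hγφapp, ← hγGφapp]
    ring
  have hmm : ∀ m : ℕ, γ m m * Gc m = (((γ m m).re * (m:ℝ)^k : ℝ) : ℂ) := by
    intro m
    rw [hGcapp]
    conv_lhs => rw [hdiag m]
    push_cast
    ring
  have hu1 : Summable (fun m : ℕ => γ m m * Gc m) :=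
    Summable.congr (Complex.summable_ofReal.mpr hγNk) (fun m => (hmm m).symm)
  have hu1val : (∑' m : ℕ, γ m m * Gc m) = ((T:ℝ):ℂ) := by
    rw [hTdef, Complex.ofReal_tsum]
    exact tsum_congr fun m => hmm m
  have hu2 : Summable (fun m : ℕ => conj (φ m) * γφ m) := by
    apply Summable.of_norm
    refine Summable.of_nonneg_of_le (fun m => norm_nonneg _) (fun m => ?_) (s1.mul_right C1)
    rw [norm_mul, RCLike.norm_conj]
    calc ‖φ m‖ * ‖γφ m‖ ≤ ‖φ m‖ * (r m * C1) :=
          mul_le_mul_of_nonneg_left (hγφ_bound m) (norm_nonneg _)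
      _ = (‖φ m‖ * r m) * C1 := by ring
  have hu3 : Summable (fun m : ℕ => conj (φ m) * γGφ m) := by
    apply Summable.of_norm
    refine Summable.of_nonneg_of_le (fun m => norm_nonneg _) (fun m => ?_) (s1.mul_right C2)
    rw [norm_mul, RCLike.norm_conj]
    calc ‖φ m‖ * ‖γGφ m‖ ≤ ‖φ m‖ * (r m * C2) :=
          mul_le_mul_of_nonneg_left (hγGφ_bound m) (norm_nonneg _)
      _ = (‖φ m‖ * r m) * C2 := by ring
  have hu4 : Summable (fun m : ℕ => Gc m * (conj (φ m) * γφ m)) := by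
    apply Summable.of_norm
    refine Summable.of_nonneg_of_le (fun m => norm_nonneg _) (fun m => ?_) (s2.mul_right C1)
    rw [norm_mul, norm_mul, RCLike.norm_conj]
    have hGn : ‖Gc m‖ = (m:ℝ)^k := by
      rw [hGcapp]
      simp [Complex.norm_real, _root_.abs_of_nonneg (hg0 m)]
    rw [hGn]
    calc (m:ℝ)^k * (‖φ m‖ * ‖γφ m‖) ≤ (m:ℝ)^k * (‖φ m‖ * (r m * C1)) := by
          refine mul_le_mul_of_nonneg_left ?_ (hg0 m)
          exact mul_le_mul_of_nonneg_left (hγφ_bound m) (norm_nonneg _)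
      _ = ((m:ℝ)^k * (‖φ m‖ * r m)) * C1 := by ring
  have hXX : X = ∑' m : ℕ, conj (φ m) * γφ m := by
    rw [hXdef, Summable.tsum_prod' hF1 (fun m => Summable.congr ((hrow m).mul_left (conj (φ m)))
      (fun l => by ring))]
    refine tsum_congr fun m => ?_
    have h5 : (∑' l : ℕ, conj (φ m) * γ m l * φ l)
        = ∑' l : ℕ, conj (φ m) * (γ m l * φ l) := tsum_congr fun l => by ring
    exact h5.trans (by rw [tsum_mul_left, hγφapp])
  have hYY : Y = ∑' m : ℕ, conj (φ m) * γGφ m := by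
    rw [hYdef, Summable.tsum_prod' hF2 (fun m => Summable.congr ((hrowG m).mul_left (conj (φ m)))
      (fun l => by ring))]
    refine tsum_congr fun m => ?_
    have h5 : (∑' l : ℕ, conj (φ m) * γ m l * (Gc l * φ l))
        = ∑' l : ℕ, conj (φ m) * (γ m l * (Gc l * φ l)) := tsum_congr fun l => by ring
    exact h5.trans (by rw [tsum_mul_left, hγGφapp])
  have hZZ : Z = ∑' m : ℕ, Gc m * (conj (φ m) * γφ m) := by
    rw [hZdef, Summable.tsum_prod' hF3 (fun m => Summable.congr ((hrow m).mul_left (Gc m * conj (φ m)))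
      (fun l => by ring))]
    refine tsum_congr fun m => ?_
    have h5 : (∑' l : ℕ, Gc m * (conj (φ m) * γ m l * φ l))
        = ∑' l : ℕ, (Gc m * conj (φ m)) * (γ m l * φ l) := tsum_congr fun l => by ring
    exact h5.trans (by rw [tsum_mul_left, hγφapp]; ring)
  have hker : kerTr (kerMul γ (qDiagq (fun n => (n:ℝ)^k) φ))
      = ((T:ℝ):ℂ) + (((S:ℝ):ℂ) * (∑' m : ℕ, conj (φ m) * γφ m)
        - (∑' m : ℕ, conj (φ m) * γGφ m) - (∑' m : ℕ, Gc m * (conj (φ m) * γφ m))) := by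
    have h0 : kerTr (kerMul γ (qDiagq (fun n => (n:ℝ)^k) φ))
        = ∑' m : ℕ, (∑' l : ℕ, γ m l * qDiagq (fun n => (n:ℝ)^k) φ l m) := rfl
    rw [h0]
    have h1 : (fun m : ℕ => (∑' l : ℕ, γ m l * qDiagq (fun n => (n:ℝ)^k) φ l m))
        = fun m : ℕ => γ m m * Gc m + (((S:ℝ):ℂ) * (conj (φ m) * γφ m)
          - conj (φ m) * γGφ m - Gc m * (conj (φ m) * γφ m)) := funext hE1
    rw [h1, Summable.tsum_add hu1 (((hu2.mul_left (((S:ℝ):ℂ))).sub hu3).sub hu4),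
      Summable.tsum_sub ((hu2.mul_left (((S:ℝ):ℂ))).sub hu3) hu4,
      Summable.tsum_sub (hu2.mul_left (((S:ℝ):ℂ))) hu3, tsum_mul_left, hu1val]
  have hTrace : (kerTr (kerMul γ (qDiagq (fun n => (n : ℝ) ^ k) φ))).re
      = T + S * X.re - Y.re - Z.re := by
    rw [hker, ← hXX, ← hYY, ← hZZ]
    simp only [Complex.add_re, Complex.sub_re, Complex.re_ofReal_mul, Complex.ofReal_re]
    ring
  have hS0 : 0 ≤ S := tsum_nonneg fun n => by positivity
  have hSX : S * X.re ≤ S := by nlinarith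
  rw [hTrace]
  linarith

end Statement13Proof

end

end BoseHubbard
end
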